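/- arXiv:1402.4360 — 2 statements merged into one kernel-verified Lean document; each statement's English description precedes it below -/
import Mathlib

section
/- Let X and Y be finite-valued random variables on a probability space and let W be a common part of (X,Y). Then the following are equivalent: (i) H[W] = I[X;Y]; (ii) there exists a finite-valued random variable Z on the same probability space with I[X;Y|Z] = 0, I[Z;X|Y] = 0, and I[Z;Y|X] = 0; (iii) I[X;Y|W] = 0. -/
set_option linter.unusedSectionVars false
set_option maxHeartbeats 1000000


open MeasureTheory Real
open scoped ENNReal

namespace SecureComputation

variable {Ω : Type*} [MeasurableSpace Ω]

/-- The pair random variable `⟨X,Y⟩`. -/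
def pair {𝒳 𝒴 : Type*} (X : Ω → 𝒳) (Y : Ω → 𝒴) : Ω → 𝒳 × 𝒴 := fun ω => (X ω, Y ω)

/-- Shannon entropy `H[X]` of a finite-valued random variable. -/
noncomputable def ent {𝒳 : Type*} (μ : Measure Ω) (X : Ω → 𝒳) : ℝ :=
  ∑' x : 𝒳, negMulLog ((μ (X ⁻¹' {x})).toReal)

/-- Mutual information `I[X;Y]`. -/
noncomputable def mi {𝒳 𝒴 : Type*} (μ : Measure Ω) (X : Ω → 𝒳) (Y : Ω → 𝒴) : ℝ :=
  ent μ X + ent μ Y - ent μ (pair X Y)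

/-- Conditional mutual information `I[X;Y|Z]`. -/
noncomputable def cmi {𝒳 𝒴 𝒵 : Type*} (μ : Measure Ω) (X : Ω → 𝒳) (Y : Ω → 𝒴)
    (Z : Ω → 𝒵) : ℝ :=
  ent μ (pair X Z) + ent μ (pair Y Z) - ent μ (pair (pair X Y) Z) - ent μ Z

/-- Conditional entropy `H[X|Y]`. -/
noncomputable def condEnt {𝒳 𝒴 : Type*} (μ : Measure Ω) (X : Ω → 𝒳) (Y : Ω → 𝒴) : ℝ :=
  ent μ (pair X Y) - ent μ Y

/-- A finite-valued random variable: preimages of points are measurable. -/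
def DiscreteRV {𝒳 : Type*} (X : Ω → 𝒳) : Prop := ∀ x, MeasurableSet (X ⁻¹' {x})

/-- The pair `(X,Y)` is trivial: some finite-valued `Z` on the same space has
`I[X;Y|Z] = 0`, `I[Z;X|Y] = 0`, `I[Z;Y|X] = 0`. -/
def IsTrivialPair {𝒳 𝒴 : Type*} (μ : Measure Ω) (X : Ω → 𝒳) (Y : Ω → 𝒴) : Prop :=
  ∃ (𝒵 : Type) (_ : Fintype 𝒵) (Z : Ω → 𝒵), DiscreteRV Z ∧
    cmi μ X Y Z = 0 ∧ cmi μ Z X Y = 0 ∧ cmi μ Z Y X = 0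

/-- `W` is a common part of the pair `(X,Y)`: it is almost surely a function of `X` alone
and of `Y` alone, and any finite-valued random variable with this property is almost surely
a function of `W`. -/
def IsCommonPart {𝒳 𝒴 𝒲 : Type*} (μ : Measure Ω) (X : Ω → 𝒳) (Y : Ω → 𝒴)
    (W : Ω → 𝒲) : Prop :=
  (∃ f : 𝒳 → 𝒲, ∀ᵐ ω ∂μ, W ω = f (X ω)) ∧
  (∃ g : 𝒴 → 𝒲, ∀ᵐ ω ∂μ, W ω = g (Y ω)) ∧
  ∀ (𝒲' : Type) (_ : Fintype 𝒲') (W' : Ω → 𝒲'),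
    (∃ f' : 𝒳 → 𝒲', ∀ᵐ ω ∂μ, W' ω = f' (X ω)) →
    (∃ g' : 𝒴 → 𝒲', ∀ᵐ ω ∂μ, W' ω = g' (Y ω)) →
    ∃ h : 𝒲 → 𝒲', ∀ᵐ ω ∂μ, W' ω = h (W ω)

variable {μ : Measure Ω}

noncomputable def prb (μ : Measure Ω) {α : Type*} (X : Ω → α) (x : α) : ℝ :=
  (μ (X ⁻¹' {x})).toReal

lemma prb_nonneg {α : Type*} (X : Ω → α) (x : α) : 0 ≤ prb μ X x := ENNReal.toReal_nonneg

lemma ent_eq_sum {α : Type*} [Fintype α] (X : Ω → α) :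
    ent μ X = ∑ x, negMulLog (prb μ X x) := tsum_fintype _

lemma prb_congr {α : Type*} {X X' : Ω → α} (h : ∀ᵐ ω ∂μ, X ω = X' ω) :
    prb μ X = prb μ X' := by
  have hD : μ {ω | X ω ≠ X' ω} = 0 := h
  funext x
  have key : ∀ (U V : Ω → α), μ {ω | U ω ≠ V ω} = 0 → μ (U ⁻¹' {x}) ≤ μ (V ⁻¹' {x}) := by
    intro U V hUV
    calc μ (U ⁻¹' {x}) ≤ μ (V ⁻¹' {x} ∪ {ω | U ω ≠ V ω}) := by
          apply measure_mono
          intro ω hω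
          by_cases hxy : U ω = V ω
          · left; simp only [Set.mem_preimage, Set.mem_singleton_iff] at hω ⊢; rw [← hxy]; exact hω
          · right; exact hxy
      _ ≤ μ (V ⁻¹' {x}) + μ {ω | U ω ≠ V ω} := measure_union_le _ _
      _ = μ (V ⁻¹' {x}) := by rw [hUV, add_zero]
  have hD' : μ {ω | X' ω ≠ X ω} = 0 := by
    convert hD using 2; ext ω; exact ne_comm
  unfold prb
  rw [le_antisymm (key X X' hD) (key X' X hD')]
lemma ent_congr {α : Type*} [Fintype α] {X X' : Ω → α} (h : ∀ᵐ ω ∂μ, X ω = X' ω) :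
    ent μ X = ent μ X' := by
  rw [ent_eq_sum, ent_eq_sum]
  show (∑ x, negMulLog (prb μ X x)) = ∑ x, negMulLog (prb μ X' x)
  rw [prb_congr h]

lemma prb_comp_inj {α β : Type*} (X : Ω → α) {e : α → β} (he : Function.Injective e) (a : α) :
    prb μ (e ∘ X) (e a) = prb μ X a := by
  have h : (e ∘ X) ⁻¹' {e a} = X ⁻¹' {a} := by ext ω; simp [he.eq_iff]
  unfold prb
  rw [h]

lemma prb_comp_not_range {α β : Type*} (X : Ω → α) (e : α → β) {b : β}
    (hb : b ∉ Set.range e) : prb μ (e ∘ X) b = 0 := by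
  unfold prb
  have : (e ∘ X) ⁻¹' {b} = ∅ := by
    ext ω; simp only [Set.mem_preimage, Set.mem_singleton_iff, Set.mem_empty_iff_false,
      iff_false]
    intro h; exact hb ⟨X ω, h⟩
  rw [this, measure_empty, ENNReal.toReal_zero]

lemma ent_comp_inj {α β : Type*} [Fintype α] [Fintype β] (X : Ω → α) {e : α → β}
    (he : Function.Injective e) : ent μ (e ∘ X) = ent μ X := by
  classical
  rw [ent_eq_sum, ent_eq_sum]
  show (∑ b, negMulLog (prb μ (e ∘ X) b)) = _
  rw [← Finset.sum_subset (Finset.subset_univ (Finset.univ.image e))]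
  · rw [Finset.sum_image (fun a _ a' _ h => he h)]
    exact Finset.sum_congr rfl fun a _ => by rw [prb_comp_inj X he]
  · intro b _ hb
    rw [prb_comp_not_range X e (by simpa using hb), negMulLog_zero]

lemma DiscreteRV.pair' {α β : Type*} {A : Ω → α} {B : Ω → β} (hA : DiscreteRV A)
    (hB : DiscreteRV B) : DiscreteRV (pair A B) := by
  rintro ⟨a, b⟩
  have : (pair A B) ⁻¹' {(a, b)} = A ⁻¹' {a} ∩ B ⁻¹' {b} := by
    ext ω; simp [pair, Prod.ext_iff]
  rw [this]; exact (hA a).inter (hB b)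

lemma DiscreteRV.comp' {α β : Type*} [Fintype α] {A : Ω → α} (hA : DiscreteRV A) (φ : α → β) :
    DiscreteRV (φ ∘ A) := by
  classical
  intro b
  have : (φ ∘ A) ⁻¹' {b} = ⋃ a ∈ Finset.univ.filter (fun a => φ a = b), A ⁻¹' {a} := by
    ext ω; simp
  rw [this]
  exact (Finset.univ.filter (fun a => φ a = b)).measurableSet_biUnion fun a _ => hA a

lemma prb_marg_left {α β : Type*} [Fintype β] [IsFiniteMeasure μ] {A : Ω → α} {B : Ω → β}
    (hA : DiscreteRV A) (hB : DiscreteRV B) (a : α) :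
    prb μ A a = ∑ b, prb μ (pair A B) (a, b) := by
  classical
  have hset : A ⁻¹' {a} = ⋃ b ∈ (Finset.univ : Finset β), (pair A B) ⁻¹' {(a, b)} := by
    ext ω; simp [pair, Prod.ext_iff]
  have hd : ((Finset.univ : Finset β) : Set β).PairwiseDisjoint
      (fun b => (pair A B) ⁻¹' {(a, b)}) := by
    intro b _ b' _ hbb'
    simp only [Function.onFun, Set.disjoint_left]
    intro ω h1 h2
    simp only [Set.mem_preimage, Set.mem_singleton_iff, pair, Prod.mk.injEq] at h1 h2
    exact hbb' (h1.2.symm.trans h2.2)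
  unfold prb
  rw [hset, measure_biUnion_finset hd fun b _ => (hA.pair' hB) (a, b),
    ENNReal.toReal_sum fun b _ => measure_ne_top μ _]

lemma prb_marg_right {α β : Type*} [Fintype α] [IsFiniteMeasure μ] {A : Ω → α} {B : Ω → β}
    (hA : DiscreteRV A) (hB : DiscreteRV B) (b : β) :
    prb μ B b = ∑ a, prb μ (pair A B) (a, b) := by
  have hswap : pair A B = Prod.swap ∘ pair B A := rfl
  rw [prb_marg_left hB hA b]
  exact Finset.sum_congr rfl fun a _ => by
    rw [hswap, show ((a, b) : α × β) = Prod.swap (b, a) from rfl,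
      prb_comp_inj (pair B A) Prod.swap_injective]

lemma sum_prb {α : Type*} [Fintype α] [IsProbabilityMeasure μ] {A : Ω → α}
    (hA : DiscreteRV A) : ∑ a, prb μ A a = 1 := by
  classical
  have hset : (Set.univ : Set Ω) = ⋃ a ∈ (Finset.univ : Finset α), A ⁻¹' {a} := by
    ext ω; simp
  have hd : ((Finset.univ : Finset α) : Set α).PairwiseDisjoint (fun a => A ⁻¹' {a}) := by
    intro a _ a' _ haa'
    simp only [Function.onFun, Set.disjoint_left]
    intro ω h1 h2
    simp only [Set.mem_preimage, Set.mem_singleton_iff] at h1 h2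
    exact haa' (h1.symm.trans h2)
  have := measure_biUnion_finset (μ := μ) hd fun a _ => hA a
  rw [← hset, measure_univ] at this
  unfold prb
  rw [← ENNReal.toReal_sum fun a _ => measure_ne_top μ _, ← this, ENNReal.toReal_one]


lemma gibbs_pt {a b : ℝ} (ha : 0 ≤ a) (hb : 0 ≤ b) (hz : b = 0 → a = 0) :
    a - b ≤ a * log a - a * log b ∧ (a * log a - a * log b = a - b → a = b) := by
  rcases eq_or_lt_of_le ha with ha0 | ha0
  · simp only [← ha0, zero_mul, sub_zero, zero_sub, sub_self]
    constructor
    · linarith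
    · intro h; linarith
  · have hb0 : 0 < b := by
      rcases eq_or_lt_of_le hb with hb0 | hb0
      · exact absurd (hz hb0.symm) (by linarith)
      · exact hb0
    have hkey : a * log a - a * log b = -(a * log (b / a)) := by
      rw [log_div (ne_of_gt hb0) (ne_of_gt ha0)]; ring
    have hle : log (b / a) ≤ b / a - 1 := log_le_sub_one_of_pos (by positivity)
    constructor
    · rw [hkey]
      have : a * log (b / a) ≤ a * (b / a - 1) := by
        exact mul_le_mul_of_nonneg_left hle ha
      have h2 : a * (b / a - 1) = b - a := by field_simp
      linarith
    · intro heq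
      by_contra hab
      have hne : b / a ≠ 1 := by
        intro h1
        exact hab (by field_simp at h1; linarith)
      have hlt : log (b / a) < b / a - 1 := log_lt_sub_one_of_pos (by positivity) hne
      have : a * log (b / a) < a * (b / a - 1) := by
        exact mul_lt_mul_of_pos_left hlt ha0
      have h2 : a * (b / a - 1) = b - a := by field_simp
      rw [hkey] at heq
      linarith

lemma gibbs {ι : Type*} [Fintype ι] (p q : ι → ℝ) (hp : ∀ i, 0 ≤ p i) (hq : ∀ i, 0 ≤ q i)
    (hz : ∀ i, q i = 0 → p i = 0) (hs : ∑ i, p i = ∑ i, q i) :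
    0 ≤ ∑ i, (p i * log (p i) - p i * log (q i)) ∧
      ((∑ i, (p i * log (p i) - p i * log (q i))) = 0 → ∀ i, p i = q i) := by
  have hpt : ∀ i, p i - q i ≤ p i * log (p i) - p i * log (q i) :=
    fun i => (gibbs_pt (hp i) (hq i) (hz i)).1
  have hsum0 : ∑ i, (p i - q i) = 0 := by
    rw [Finset.sum_sub_distrib, hs, sub_self]
  constructor
  · calc (0:ℝ) = ∑ i, (p i - q i) := hsum0.symm
      _ ≤ _ := Finset.sum_le_sum fun i _ => hpt i
  · intro h0
    have heach : ∀ i ∈ Finset.univ, p i - q i = p i * log (p i) - p i * log (q i) := by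
      rw [← Finset.sum_eq_sum_iff_of_le fun i _ => hpt i, h0, hsum0]
    intro i
    exact (gibbs_pt (hp i) (hq i) (hz i)).2 (heach i (Finset.mem_univ i)).symm

lemma negMulLog_sum_expand {ι : Type*} [Fintype ι] (f : ι → ℝ) (t : ℝ) (ht : t = ∑ i, f i) :
    negMulLog t = ∑ i, -(f i * log t) := by
  show -t * log t = ∑ i, -(f i * log t)
  rw [show -t * log t = -((∑ i, f i) * log t) from by rw [← ht]; ring, Finset.sum_mul,
    ← Finset.sum_neg_distrib]

section Triple

variable {α β γ : Type*} [Fintype α] [Fintype β] [Fintype γ]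
variable {A : Ω → α} {B : Ω → β} {C : Ω → γ}

/-- rotate coordinates -/
def rotAC : ((α × β) × γ) ≃ ((α × γ) × β) where
  toFun x := ((x.1.1, x.2), x.1.2)
  invFun y := ((y.1.1, y.2), y.1.2)
  left_inv := fun ⟨⟨_, _⟩, _⟩ => rfl
  right_inv := fun ⟨⟨_, _⟩, _⟩ => rfl

def rotBC : ((α × β) × γ) ≃ ((β × γ) × α) where
  toFun x := ((x.1.2, x.2), x.1.1)
  invFun y := ((y.2, y.1.1), y.1.2)
  left_inv := fun ⟨⟨_, _⟩, _⟩ => rfl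
  right_inv := fun ⟨⟨_, _⟩, _⟩ => rfl

variable [IsProbabilityMeasure μ]

lemma margAC (hA : DiscreteRV A) (hB : DiscreteRV B) (hC : DiscreteRV C) (a : α) (c : γ) :
    prb μ (pair A C) (a, c) = ∑ b, prb μ (pair (pair A B) C) ((a, b), c) := by
  rw [prb_marg_left (hA.pair' hC) hB (a, c)]
  refine Finset.sum_congr rfl fun b _ => ?_
  have h1 : pair (pair A C) B = (rotAC : ((α × β) × γ) ≃ _) ∘ pair (pair A B) C := rfl
  have h2 : ((a, c), b) = (rotAC : ((α × β) × γ) ≃ _) ((a, b), c) := rfl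
  rw [h1, h2, prb_comp_inj _ rotAC.injective]

lemma margBC (hA : DiscreteRV A) (hB : DiscreteRV B) (hC : DiscreteRV C) (b : β) (c : γ) :
    prb μ (pair B C) (b, c) = ∑ a, prb μ (pair (pair A B) C) ((a, b), c) := by
  rw [prb_marg_left (hB.pair' hC) hA (b, c)]
  refine Finset.sum_congr rfl fun a _ => ?_
  have h1 : pair (pair B C) A = (rotBC : ((α × β) × γ) ≃ _) ∘ pair (pair A B) C := rfl
  have h2 : ((b, c), a) = (rotBC : ((α × β) × γ) ≃ _) ((a, b), c) := rfl
  rw [h1, h2, prb_comp_inj _ rotBC.injective]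

lemma margC (hA : DiscreteRV A) (hB : DiscreteRV B) (hC : DiscreteRV C) (c : γ) :
    prb μ C c = ∑ ab : α × β, prb μ (pair (pair A B) C) (ab, c) :=
  prb_marg_right (hA.pair' hB) hC c

/-- `P x ≤ pAC x` etc. -/
lemma le_margAC (hA : DiscreteRV A) (hB : DiscreteRV B) (hC : DiscreteRV C)
    (a : α) (b : β) (c : γ) :
    prb μ (pair (pair A B) C) ((a, b), c) ≤ prb μ (pair A C) (a, c) := by
  rw [margAC hA hB hC]
  exact Finset.single_le_sum (f := fun b' => prb μ (pair (pair A B) C) ((a, b'), c))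
    (fun b' _ => prb_nonneg _ _) (Finset.mem_univ b)

lemma le_margBC (hA : DiscreteRV A) (hB : DiscreteRV B) (hC : DiscreteRV C)
    (a : α) (b : β) (c : γ) :
    prb μ (pair (pair A B) C) ((a, b), c) ≤ prb μ (pair B C) (b, c) := by
  rw [margBC hA hB hC]
  exact Finset.single_le_sum (f := fun a' => prb μ (pair (pair A B) C) ((a', b), c))
    (fun a' _ => prb_nonneg _ _) (Finset.mem_univ a)

lemma le_margC (hA : DiscreteRV A) (hB : DiscreteRV B) (hC : DiscreteRV C)
    (a : α) (b : β) (c : γ) :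
    prb μ (pair (pair A B) C) ((a, b), c) ≤ prb μ C c := by
  rw [margC hA hB hC]
  exact Finset.single_le_sum (f := fun ab : α × β => prb μ (pair (pair A B) C) (ab, c))
    (fun ab _ => prb_nonneg _ _) (Finset.mem_univ (a, b))

lemma le_margC_AC (hA : DiscreteRV A) (hC : DiscreteRV C) (a : α) (c : γ) :
    prb μ (pair A C) (a, c) ≤ prb μ C c := by
  rw [prb_marg_right hA hC c]
  exact Finset.single_le_sum (f := fun a' => prb μ (pair A C) (a', c))
    (fun a' _ => prb_nonneg _ _) (Finset.mem_univ a)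

lemma le_margC_BC (hB : DiscreteRV B) (hC : DiscreteRV C) (b : β) (c : γ) :
    prb μ (pair B C) (b, c) ≤ prb μ C c := by
  rw [prb_marg_right hB hC c]
  exact Finset.single_le_sum (f := fun b' => prb μ (pair B C) (b', c))
    (fun b' _ => prb_nonneg _ _) (Finset.mem_univ b)

end Triple

section Triple2

variable {α β γ : Type*} [Fintype α] [Fintype β] [Fintype γ]
variable {A : Ω → α} {B : Ω → β} {C : Ω → γ}
variable [IsProbabilityMeasure μ]

lemma cmi_eq_gibbs (hA : DiscreteRV A) (hB : DiscreteRV B) (hC : DiscreteRV C) :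
    cmi μ A B C = ∑ x : (α × β) × γ,
      (prb μ (pair (pair A B) C) x * log (prb μ (pair (pair A B) C) x)
        - prb μ (pair (pair A B) C) x *
          log (prb μ (pair A C) (x.1.1, x.2) * prb μ (pair B C) (x.1.2, x.2) / prb μ C x.2)) := by
  have hAC : ent μ (pair A C)
      = ∑ x : (α × β) × γ, -(prb μ (pair (pair A B) C) x * log (prb μ (pair A C) (x.1.1, x.2))) := by
    rw [ent_eq_sum]
    calc (∑ y : α × γ, negMulLog (prb μ (pair A C) y))
        = ∑ y : α × γ, ∑ b, -(prb μ (pair (pair A B) C) ((y.1, b), y.2)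
            * log (prb μ (pair A C) y)) :=
          Finset.sum_congr rfl fun y _ =>
            negMulLog_sum_expand _ _ (margAC hA hB hC y.1 y.2)
      _ = ∑ z : (α × γ) × β, -(prb μ (pair (pair A B) C) ((z.1.1, z.2), z.1.2)
            * log (prb μ (pair A C) z.1)) :=
          (Fintype.sum_prod_type (fun z : (α × γ) × β =>
            -(prb μ (pair (pair A B) C) ((z.1.1, z.2), z.1.2)
              * log (prb μ (pair A C) z.1)))).symm
      _ = _ := (Fintype.sum_equiv rotAC _ _ fun x => rfl).symm
  have hBC : ent μ (pair B C)
      = ∑ x : (α × β) × γ, -(prb μ (pair (pair A B) C) x * log (prb μ (pair B C) (x.1.2, x.2))) := by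
    rw [ent_eq_sum]
    calc (∑ y : β × γ, negMulLog (prb μ (pair B C) y))
        = ∑ y : β × γ, ∑ a, -(prb μ (pair (pair A B) C) ((a, y.1), y.2)
            * log (prb μ (pair B C) y)) :=
          Finset.sum_congr rfl fun y _ =>
            negMulLog_sum_expand _ _ (margBC hA hB hC y.1 y.2)
      _ = ∑ z : (β × γ) × α, -(prb μ (pair (pair A B) C) ((z.2, z.1.1), z.1.2)
            * log (prb μ (pair B C) z.1)) :=
          (Fintype.sum_prod_type (fun z : (β × γ) × α =>
            -(prb μ (pair (pair A B) C) ((z.2, z.1.1), z.1.2)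
              * log (prb μ (pair B C) z.1)))).symm
      _ = _ := (Fintype.sum_equiv rotBC _ _ fun x => rfl).symm
  have hCC : ent μ C
      = ∑ x : (α × β) × γ, -(prb μ (pair (pair A B) C) x * log (prb μ C x.2)) := by
    rw [ent_eq_sum]
    calc (∑ c : γ, negMulLog (prb μ C c))
        = ∑ c : γ, ∑ ab : α × β, -(prb μ (pair (pair A B) C) (ab, c) * log (prb μ C c)) :=
          Finset.sum_congr rfl fun c _ =>
            negMulLog_sum_expand _ _ (margC hA hB hC c)
      _ = ∑ z : γ × (α × β), -(prb μ (pair (pair A B) C) (z.2, z.1) * log (prb μ C z.1)) :=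
          (Fintype.sum_prod_type (fun z : γ × (α × β) =>
            -(prb μ (pair (pair A B) C) (z.2, z.1) * log (prb μ C z.1)))).symm
      _ = _ := (Fintype.sum_equiv (Equiv.prodComm (α × β) γ) _ _ fun x => rfl).symm
  have hT : ent μ (pair (pair A B) C) = ∑ x : (α × β) × γ,
      negMulLog (prb μ (pair (pair A B) C) x) := ent_eq_sum _
  show ent μ (pair A C) + ent μ (pair B C) - ent μ (pair (pair A B) C) - ent μ C = _
  rw [hAC, hBC, hCC, hT, ← Finset.sum_add_distrib, ← Finset.sum_sub_distrib,
    ← Finset.sum_sub_distrib]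
  refine Finset.sum_congr rfl fun x _ => ?_
  obtain ⟨⟨a, b⟩, c⟩ := x
  rcases eq_or_lt_of_le (prb_nonneg (μ := μ) (pair (pair A B) C) ((a, b), c)) with h0 | h0
  · simp [← h0, negMulLog]
  · have hACpos : 0 < prb μ (pair A C) (a, c) := lt_of_lt_of_le h0 (le_margAC hA hB hC a b c)
    have hBCpos : 0 < prb μ (pair B C) (b, c) := lt_of_lt_of_le h0 (le_margBC hA hB hC a b c)
    have hCpos : 0 < prb μ C c := lt_of_lt_of_le h0 (le_margC hA hB hC a b c)
    rw [log_div (mul_ne_zero (ne_of_gt hACpos) (ne_of_gt hBCpos)) (ne_of_gt hCpos), log_mul (ne_of_gt hACpos) (ne_of_gt hBCpos),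
      negMulLog]
    ring

lemma sum_Q (hA : DiscreteRV A) (hB : DiscreteRV B) (hC : DiscreteRV C) :
    ∑ x : (α × β) × γ,
      (prb μ (pair A C) (x.1.1, x.2) * prb μ (pair B C) (x.1.2, x.2) / prb μ C x.2) = 1 := by
  have key : ∀ c : γ, ∑ ab : α × β,
      (prb μ (pair A C) (ab.1, c) * prb μ (pair B C) (ab.2, c) / prb μ C c) = prb μ C c := by
    intro c
    rw [Fintype.sum_prod_type]
    rcases eq_or_lt_of_le (prb_nonneg (μ := μ) C c) with h0 | h0
    · rw [← h0]
      apply Finset.sum_eq_zero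
      intro a _
      have hac : prb μ (pair A C) (a, c) = 0 :=
        le_antisymm (le_trans (le_margC_AC hA hC a c) h0.symm.le) (prb_nonneg _ _)
      apply Finset.sum_eq_zero
      intro b _
      rw [hac, zero_mul, zero_div]
    · have : ∀ a : α, ∑ b, prb μ (pair A C) (a, c) * prb μ (pair B C) (b, c) / prb μ C c
          = prb μ (pair A C) (a, c) := by
        intro a
        rw [← Finset.sum_div, ← Finset.mul_sum, ← prb_marg_right hB hC c,
          mul_div_assoc, div_self (ne_of_gt h0), mul_one]
      rw [Finset.sum_congr rfl fun a _ => this a, ← prb_marg_right hA hC c]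
  calc (∑ x : (α × β) × γ,
      (prb μ (pair A C) (x.1.1, x.2) * prb μ (pair B C) (x.1.2, x.2) / prb μ C x.2))
      = ∑ z : γ × (α × β),
        (prb μ (pair A C) (z.2.1, z.1) * prb μ (pair B C) (z.2.2, z.1) / prb μ C z.1) :=
        Fintype.sum_equiv (Equiv.prodComm (α × β) γ) _ _ fun x => rfl
    _ = ∑ c : γ, prb μ C c := by
        rw [Fintype.sum_prod_type]
        exact Finset.sum_congr rfl fun c _ => key c
    _ = 1 := sum_prb hC

lemma Q_zero_imp (hA : DiscreteRV A) (hB : DiscreteRV B) (hC : DiscreteRV C)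
    (x : (α × β) × γ)
    (h : prb μ (pair A C) (x.1.1, x.2) * prb μ (pair B C) (x.1.2, x.2) / prb μ C x.2 = 0) :
    prb μ (pair (pair A B) C) x = 0 := by
  obtain ⟨⟨a, b⟩, c⟩ := x
  rcases div_eq_zero_iff.mp h with h1 | h1
  · rcases mul_eq_zero.mp h1 with h2 | h2
    · exact le_antisymm (h2 ▸ le_margAC hA hB hC a b c) (prb_nonneg _ _)
    · exact le_antisymm (h2 ▸ le_margBC hA hB hC a b c) (prb_nonneg _ _)
  · exact le_antisymm (h1 ▸ le_margC hA hB hC a b c) (prb_nonneg _ _)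

lemma cmi_nonneg (hA : DiscreteRV A) (hB : DiscreteRV B) (hC : DiscreteRV C) :
    0 ≤ cmi μ A B C := by
  rw [cmi_eq_gibbs hA hB hC]
  exact (gibbs _ _ (fun x => prb_nonneg _ _)
    (fun x => div_nonneg (mul_nonneg (prb_nonneg _ _) (prb_nonneg _ _)) (prb_nonneg _ _))
    (Q_zero_imp hA hB hC) (by rw [sum_prb ((hA.pair' hB).pair' hC), sum_Q hA hB hC])).1

lemma cmi_eq_zero_iff (hA : DiscreteRV A) (hB : DiscreteRV B) (hC : DiscreteRV C) :
    cmi μ A B C = 0 ↔ ∀ (a : α) (b : β) (c : γ),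
      prb μ (pair (pair A B) C) ((a, b), c) * prb μ C c
        = prb μ (pair A C) (a, c) * prb μ (pair B C) (b, c) := by
  constructor
  · intro h0
    have := (gibbs _ _ (fun x => prb_nonneg (μ := μ) (pair (pair A B) C) x)
      (fun x => div_nonneg (mul_nonneg (prb_nonneg _ _) (prb_nonneg _ _)) (prb_nonneg _ _))
      (Q_zero_imp hA hB hC)
      (by rw [sum_prb ((hA.pair' hB).pair' hC), sum_Q hA hB hC])).2
      (by rw [← cmi_eq_gibbs hA hB hC]; exact h0)
    intro a b c
    have hx := this ((a, b), c)
    rcases eq_or_lt_of_le (prb_nonneg (μ := μ) C c) with hc0 | hc0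
    · have hac : prb μ (pair A C) (a, c) = 0 :=
        le_antisymm (le_trans (le_margC_AC hA hC a c) hc0.symm.le) (prb_nonneg _ _)
      rw [← hc0, hac, mul_zero, zero_mul]
    · rw [hx, div_mul_cancel₀ _ (ne_of_gt hc0)]
  · intro h
    rw [cmi_eq_gibbs hA hB hC]
    apply Finset.sum_eq_zero
    intro x _
    obtain ⟨⟨a, b⟩, c⟩ := x
    rcases eq_or_lt_of_le (prb_nonneg (μ := μ) C c) with hc0 | hc0
    · have hp : prb μ (pair (pair A B) C) ((a, b), c) = 0 :=
        le_antisymm (le_trans (le_margC hA hB hC a b c) hc0.symm.le) (prb_nonneg _ _)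
      rw [hp, zero_mul, zero_mul, sub_zero]
    · have hq : prb μ (pair A C) (a, c) * prb μ (pair B C) (b, c) / prb μ C c
          = prb μ (pair (pair A B) C) ((a, b), c) := by
        rw [← h a b c, mul_div_assoc, div_self (ne_of_gt hc0), mul_one]
      rw [hq, sub_self]

end Triple2

section EntMono

variable {α β : Type*} [Fintype α] [Fintype β] [IsProbabilityMeasure μ]
variable {A : Ω → α} {B : Ω → β}

lemma ent_le_ent_pair (hA : DiscreteRV A) (hB : DiscreteRV B) :
    ent μ A ≤ ent μ (pair A B) := by
  rw [ent_eq_sum, ent_eq_sum, Fintype.sum_prod_type]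
  apply Finset.sum_le_sum
  intro a _
  rw [negMulLog_sum_expand (fun b => prb μ (pair A B) (a, b)) _ (prb_marg_left hA hB a)]
  apply Finset.sum_le_sum
  intro b _
  rcases eq_or_lt_of_le (prb_nonneg (μ := μ) (pair A B) (a, b)) with h0 | h0
  · simp [← h0, negMulLog]
  · have hle : prb μ (pair A B) (a, b) ≤ prb μ A a := by
      rw [prb_marg_left hA hB a]
      exact Finset.single_le_sum (f := fun b' => prb μ (pair A B) (a, b'))
        (fun b' _ => prb_nonneg _ _) (Finset.mem_univ b)
    have : log (prb μ (pair A B) (a, b)) ≤ log (prb μ A a) := log_le_log h0 hle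
    have hnm : negMulLog (prb μ (pair A B) (a, b))
        = -(prb μ (pair A B) (a, b) * log (prb μ (pair A B) (a, b))) := by rw [negMulLog_eq_neg]
    show -(prb μ (pair A B) (a, b) * log (prb μ A a)) ≤ negMulLog (prb μ (pair A B) (a, b))
    rw [hnm]
    nlinarith
  
lemma ent_comp_le (hA : DiscreteRV A) (φ : α → β) : ent μ (φ ∘ A) ≤ ent μ A := by
  have h1 : pair (φ ∘ A) A = (fun a => (φ a, a)) ∘ A := rfl
  have h2 : Function.Injective (fun a : α => (φ a, a)) := fun a a' h => congrArg Prod.snd h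
  calc ent μ (φ ∘ A) ≤ ent μ (pair (φ ∘ A) A) := ent_le_ent_pair (hA.comp' φ) hA
    _ = ent μ A := by rw [h1, ent_comp_inj A h2]

end EntMono

lemma ent_pair_comm {α β : Type*} [Fintype α] [Fintype β] (A : Ω → α) (B : Ω → β) :
    ent μ (pair B A) = ent μ (pair A B) := by
  have h : pair B A = Prod.swap ∘ pair A B := rfl
  rw [h, ent_comp_inj _ Prod.swap_injective]

lemma ae_prb_pos {α : Type*} [Fintype α] [IsProbabilityMeasure μ] (A : Ω → α) :
    ∀ᵐ ω ∂μ, 0 < prb μ A (A ω) := by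
  classical
  rw [ae_iff]
  have hsub : {ω | ¬ 0 < prb μ A (A ω)}
      ⊆ ⋃ a ∈ {a : α | prb μ A a = 0}, A ⁻¹' {a} := by
    intro ω hω
    simp only [Set.mem_setOf_eq, not_lt] at hω
    have h0 : prb μ A (A ω) = 0 := le_antisymm hω (prb_nonneg _ _)
    simp only [Set.mem_iUnion, Set.mem_setOf_eq]
    exact ⟨A ω, h0, rfl⟩
  refine measure_mono_null hsub ?_
  rw [measure_biUnion_null_iff (Set.to_countable _)]
  intro a ha
  simp only [Set.mem_setOf_eq] at ha
  unfold prb at ha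
  rcases (ENNReal.toReal_eq_zero_iff _).mp ha with h | h
  · exact h
  · exact absurd h (measure_ne_top μ _)

/-- For a common part `W` of `(X,Y)`, the following are equivalent:
(i) `H[W] = I[X;Y]`; (ii) the pair `(X,Y)` is trivial; (iii) `I[X;Y|W] = 0`. -/
theorem stmt2 {Ω : Type*} [MeasurableSpace Ω] (μ : Measure Ω) [IsProbabilityMeasure μ]
    {𝒳 𝒴 𝒲 : Type} [Fintype 𝒳] [Fintype 𝒴] [Fintype 𝒲]
    [Nonempty 𝒳] [Nonempty 𝒴] [Nonempty 𝒲]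
    (X : Ω → 𝒳) (Y : Ω → 𝒴) (W : Ω → 𝒲)
    (hX : DiscreteRV X) (hY : DiscreteRV Y) (hW : DiscreteRV W)
    (hcp : IsCommonPart μ X Y W) :
    [ent μ W = mi μ X Y, IsTrivialPair μ X Y, cmi μ X Y W = 0].TFAE := by
  classical
  obtain ⟨⟨f, hf⟩, ⟨g, hg⟩, hmax⟩ := hcp
  -- basic entropy identities from W = f ∘ X = g ∘ Y a.e.
  have inj_graph : ∀ {δ ε : Type} (φ : δ → ε), Function.Injective (fun d : δ => (d, φ d)) :=
    fun φ d d' h => congrArg Prod.fst h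
  have eXW : ent μ (pair X W) = ent μ X := by
    have hae : ∀ᵐ ω ∂μ, pair X W ω = ((fun x => (x, f x)) ∘ X) ω := by
      filter_upwards [hf] with ω hω
      show (X ω, W ω) = (X ω, f (X ω))
      rw [hω]
    rw [ent_congr hae, ent_comp_inj X (inj_graph f)]
  have eYW : ent μ (pair Y W) = ent μ Y := by
    have hae : ∀ᵐ ω ∂μ, pair Y W ω = ((fun y => (y, g y)) ∘ Y) ω := by
      filter_upwards [hg] with ω hω
      show (Y ω, W ω) = (Y ω, g (Y ω))
      rw [hω]
    rw [ent_congr hae, ent_comp_inj Y (inj_graph g)]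
  have eXYW : ent μ (pair (pair X Y) W) = ent μ (pair X Y) := by
    have hae : ∀ᵐ ω ∂μ, pair (pair X Y) W ω
        = ((fun p : 𝒳 × 𝒴 => (p, f p.1)) ∘ pair X Y) ω := by
      filter_upwards [hf] with ω hω
      show ((X ω, Y ω), W ω) = ((X ω, Y ω), f (X ω))
      rw [hω]
    have hinj : Function.Injective (fun p : 𝒳 × 𝒴 => (p, f p.1)) :=
      fun p p' h => congrArg Prod.fst h
    rw [ent_congr hae, ent_comp_inj (pair X Y) hinj]
  have key : cmi μ X Y W = mi μ X Y - ent μ W := by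
    show ent μ (pair X W) + ent μ (pair Y W) - ent μ (pair (pair X Y) W) - ent μ W = _
    rw [eXW, eYW, eXYW]
    show _ = ent μ X + ent μ Y - ent μ (pair X Y) - ent μ W
    ring
  tfae_have 1 ↔ 3 := by
    rw [key]
    constructor <;> intro h <;> linarith
  tfae_have 3 → 2 := by
    intro h3
    refine ⟨𝒲, inferInstance, W, hW, h3, ?_, ?_⟩
    · -- cmi μ W X Y = 0
      have e1 : ent μ (pair W Y) = ent μ Y := by
        have hae : ∀ᵐ ω ∂μ, pair W Y ω = ((fun y => (g y, y)) ∘ Y) ω := by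
          filter_upwards [hg] with ω hω
          show (W ω, Y ω) = (g (Y ω), Y ω)
          rw [hω]
        have hinj : Function.Injective (fun y : 𝒴 => (g y, y)) :=
          fun y y' h => congrArg Prod.snd h
        rw [ent_congr hae, ent_comp_inj Y hinj]
      have e2 : ent μ (pair (pair W X) Y) = ent μ (pair X Y) := by
        have hae : ∀ᵐ ω ∂μ, pair (pair W X) Y ω
            = ((fun p : 𝒳 × 𝒴 => ((g p.2, p.1), p.2)) ∘ pair X Y) ω := by
          filter_upwards [hg] with ω hω
          show ((W ω, X ω), Y ω) = ((g (Y ω), X ω), Y ω)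
          rw [hω]
        have hinj : Function.Injective (fun p : 𝒳 × 𝒴 => ((g p.2, p.1), p.2)) := by
          rintro ⟨x1, y1⟩ ⟨x2, y2⟩ h
          simp only [Prod.mk.injEq] at h
          exact Prod.ext h.1.2 h.2
        rw [ent_congr hae, ent_comp_inj (pair X Y) hinj]
      show ent μ (pair W Y) + ent μ (pair X Y) - ent μ (pair (pair W X) Y) - ent μ Y = 0
      rw [e1, e2]
      ring
    · -- cmi μ W Y X = 0
      have e1 : ent μ (pair W X) = ent μ X := by
        have hae : ∀ᵐ ω ∂μ, pair W X ω = ((fun x => (f x, x)) ∘ X) ω := by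
          filter_upwards [hf] with ω hω
          show (W ω, X ω) = (f (X ω), X ω)
          rw [hω]
        have hinj : Function.Injective (fun x : 𝒳 => (f x, x)) :=
          fun x x' h => congrArg Prod.snd h
        rw [ent_congr hae, ent_comp_inj X hinj]
      have e2 : ent μ (pair (pair W Y) X) = ent μ (pair X Y) := by
        have hae : ∀ᵐ ω ∂μ, pair (pair W Y) X ω
            = ((fun p : 𝒳 × 𝒴 => ((f p.1, p.2), p.1)) ∘ pair X Y) ω := by
          filter_upwards [hf] with ω hω
          show ((W ω, Y ω), X ω) = ((f (X ω), Y ω), X ω)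
          rw [hω]
        have hinj : Function.Injective (fun p : 𝒳 × 𝒴 => ((f p.1, p.2), p.1)) := by
          rintro ⟨x1, y1⟩ ⟨x2, y2⟩ h
          simp only [Prod.mk.injEq] at h
          exact Prod.ext h.2 h.1.2
        rw [ent_congr hae, ent_comp_inj (pair X Y) hinj]
      have e3 : ent μ (pair Y X) = ent μ (pair X Y) := ent_pair_comm X Y
      show ent μ (pair W X) + ent μ (pair Y X) - ent μ (pair (pair W Y) X) - ent μ X = 0
      rw [e1, e2, e3]
      ring
  tfae_have 2 → 1 := by
    intro h2
    obtain ⟨𝒵, i𝒵, Z, hZ, hc1, hc2, hc3⟩ := h2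
    -- pointwise conditional independence conditions
    have hp2 : ∀ (z : 𝒵) (x : 𝒳) (y : 𝒴),
        prb μ (pair (pair Z X) Y) ((z, x), y) * prb μ Y y
          = prb μ (pair Z Y) (z, y) * prb μ (pair X Y) (x, y) := by
      intro z x y
      exact (cmi_eq_zero_iff hZ hX hY).mp hc2 z x y
    have hp3 : ∀ (z : 𝒵) (y : 𝒴) (x : 𝒳),
        prb μ (pair (pair Z Y) X) ((z, y), x) * prb μ X x
          = prb μ (pair Z X) (z, x) * prb μ (pair Y X) (y, x) := by
      intro z y x
      exact (cmi_eq_zero_iff hZ hY hX).mp hc3 z y x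
    -- reindexing of probabilities
    have pr1 : ∀ (z : 𝒵) (x : 𝒳) (y : 𝒴),
        prb μ (pair (pair Z Y) X) ((z, y), x) = prb μ (pair (pair Z X) Y) ((z, x), y) := by
      intro z x y
      have hinj : Function.Injective
          (fun w : (𝒵 × 𝒴) × 𝒳 => ((w.1.1, w.2), w.1.2) : (𝒵 × 𝒴) × 𝒳 → (𝒵 × 𝒳) × 𝒴) := by
        rintro ⟨⟨z1, y1⟩, x1⟩ ⟨⟨z2, y2⟩, x2⟩ h
        simp_all [Prod.ext_iff]
      have hcomp : pair (pair Z X) Y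
          = (fun w : (𝒵 × 𝒴) × 𝒳 => ((w.1.1, w.2), w.1.2)) ∘ pair (pair Z Y) X := rfl
      rw [hcomp]
      exact (prb_comp_inj (pair (pair Z Y) X) hinj ((z, y), x)).symm
    have prYX : ∀ (x : 𝒳) (y : 𝒴), prb μ (pair Y X) (y, x) = prb μ (pair X Y) (x, y) := by
      intro x y
      have hcomp : pair X Y = Prod.swap ∘ pair Y X := rfl
      rw [hcomp]
      exact (prb_comp_inj (pair Y X) Prod.swap_injective (y, x)).symm
    have prXZ : ∀ (x : 𝒳) (z : 𝒵), prb μ (pair X Z) (x, z) = prb μ (pair Z X) (z, x) := by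
      intro x z
      have hcomp : pair X Z = Prod.swap ∘ pair Z X := rfl
      rw [hcomp]
      exact prb_comp_inj (pair Z X) Prod.swap_injective (z, x)
    -- marginal bounds
    have hxle : ∀ (x : 𝒳) (y : 𝒴), prb μ (pair X Y) (x, y) ≤ prb μ X x := by
      intro x y
      rw [prb_marg_left hX hY x]
      exact Finset.single_le_sum (f := fun y' => prb μ (pair X Y) (x, y'))
        (fun _ _ => prb_nonneg _ _) (Finset.mem_univ y)
    have hyle : ∀ (x : 𝒳) (y : 𝒴), prb μ (pair X Y) (x, y) ≤ prb μ Y y := by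
      intro x y
      rw [prb_marg_right hX hY y]
      exact Finset.single_le_sum (f := fun x' => prb μ (pair X Y) (x', y))
        (fun _ _ => prb_nonneg _ _) (Finset.mem_univ x)
    -- the key cross identity
    have hkey : ∀ (z : 𝒵) (x : 𝒳) (y : 𝒴), 0 < prb μ (pair X Y) (x, y) →
        prb μ (pair Z X) (z, x) * prb μ Y y = prb μ (pair Z Y) (z, y) * prb μ X x := by
      intro z x y hxy
      have hI : prb μ (pair (pair Z X) Y) ((z, x), y) * prb μ X x
          = prb μ (pair Z X) (z, x) * prb μ (pair X Y) (x, y) := by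
        have := hp3 z y x
        rw [pr1, prYX] at this
        exact this
      have hII := hp2 z x y
      exact mul_right_cancel₀ (ne_of_gt hxy)
        (by linear_combination prb μ X x * hII - prb μ Y y * hI)
    -- the common-component relation
    set r : 𝒳 → 𝒳 → Prop :=
      fun x x' => ∃ y, 0 < prb μ (pair X Y) (x, y) ∧ 0 < prb μ (pair X Y) (x', y) with hr
    have hcross : ∀ x x', Relation.EqvGen r x x' → x = x' ∨
        (0 < prb μ X x ∧ 0 < prb μ X x' ∧ ∀ z, prb μ (pair Z X) (z, x) * prb μ X x'
          = prb μ (pair Z X) (z, x') * prb μ X x) := by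
      intro x x' h
      induction h with
      | rel x x' hrel =>
        obtain ⟨y, hxy, hx'y⟩ := hrel
        right
        refine ⟨lt_of_lt_of_le hxy (hxle x y), lt_of_lt_of_le hx'y (hxle x' y), fun z => ?_⟩
        have k1 := hkey z x y hxy
        have k2 := hkey z x' y hx'y
        have hy : 0 < prb μ Y y := lt_of_lt_of_le hxy (hyle x y)
        exact mul_right_cancel₀ (ne_of_gt hy)
          (by linear_combination prb μ X x' * k1 - prb μ X x * k2)
      | refl x => exact Or.inl rfl
      | symm x x' _ ih =>
        rcases ih with h | ⟨h1, h2, h3⟩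
        · exact Or.inl h.symm
        · exact Or.inr ⟨h2, h1, fun z => (h3 z).symm⟩
      | trans x x' x'' _ _ ih1 ih2 =>
        rcases ih1 with h | ⟨h1, h2, h3⟩
        · rwa [h]
        · rcases ih2 with h' | ⟨g1, g2, g3⟩
          · rw [← h']; exact Or.inr ⟨h1, h2, h3⟩
          · refine Or.inr ⟨h1, g2, fun z => ?_⟩
            exact mul_right_cancel₀ (ne_of_gt h2)
              (by linear_combination prb μ X x'' * h3 z + prb μ X x * g3 z)
    -- quotient by connected components, via representatives
    let s : Setoid 𝒳 := ⟨Relation.EqvGen r, Relation.EqvGen.is_equivalence r⟩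
    let qf : 𝒳 → 𝒳 := fun x => (Quotient.mk s x).out
    have hq_iff : ∀ x x', qf x = qf x' ↔ Relation.EqvGen r x x' := by
      intro x x'
      constructor
      · intro h
        exact Quotient.exact (calc
          Quotient.mk s x = Quotient.mk s (qf x) := (Quotient.out_eq _).symm
          _ = Quotient.mk s (qf x') := by rw [h]
          _ = Quotient.mk s x' := Quotient.out_eq _)
      · intro h
        show (Quotient.mk s x).out = (Quotient.mk s x').out
        congr 1
        exact Quotient.sound h
    set V : Ω → 𝒳 := qf ∘ X with hVdef
    have hV : DiscreteRV V := hX.comp' qf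
    -- prb computations involving V
    have eXZV : ∀ (x : 𝒳) (z : 𝒵) (v : 𝒳), prb μ (pair (pair X Z) V) ((x, z), v)
        = if v = qf x then prb μ (pair X Z) (x, z) else 0 := by
      intro x z v
      have hcomp : pair (pair X Z) V
          = (fun p : 𝒳 × 𝒵 => ((p.1, p.2), qf p.1)) ∘ pair X Z := rfl
      have hinj : Function.Injective (fun p : 𝒳 × 𝒵 => ((p.1, p.2), qf p.1)) := by
        rintro ⟨x1, z1⟩ ⟨x2, z2⟩ h
        simp only [Prod.mk.injEq] at h
        exact Prod.ext h.1.1 h.1.2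
      by_cases hv : v = qf x
      · rw [if_pos hv, hcomp, hv]
        exact prb_comp_inj (pair X Z) hinj (x, z)
      · rw [if_neg hv, hcomp]
        apply prb_comp_not_range
        rintro ⟨⟨x1, z1⟩, hp⟩
        simp only [Prod.mk.injEq] at hp
        exact hv (by rw [← hp.2, hp.1.1])
    have eXV : ∀ (x : 𝒳) (v : 𝒳), prb μ (pair X V) (x, v)
        = if v = qf x then prb μ X x else 0 := by
      intro x v
      have hcomp : pair X V = (fun x' : 𝒳 => (x', qf x')) ∘ X := rfl
      have hinj : Function.Injective (fun x' : 𝒳 => (x', qf x')) :=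
        fun a a' h => congrArg Prod.fst h
      by_cases hv : v = qf x
      · rw [if_pos hv, hcomp, hv]
        exact prb_comp_inj X hinj x
      · rw [if_neg hv, hcomp]
        apply prb_comp_not_range
        rintro ⟨x1, hp⟩
        simp only [Prod.mk.injEq] at hp
        exact hv (by rw [← hp.2, hp.1])
    have eZV : ∀ (z : 𝒵) (v : 𝒳), prb μ (pair Z V) (z, v)
        = ∑ x', (if v = qf x' then prb μ (pair Z X) (z, x') else 0) := by
      intro z v
      rw [prb_marg_left (hZ.pair' hV) hX (z, v)]
      refine Finset.sum_congr rfl fun x' _ => ?_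
      have hcomp : pair (pair Z V) X
          = (fun p : 𝒵 × 𝒳 => ((p.1, qf p.2), p.2)) ∘ pair Z X := rfl
      have hinj : Function.Injective (fun p : 𝒵 × 𝒳 => ((p.1, qf p.2), p.2)) := by
        rintro ⟨z1, x1⟩ ⟨z2, x2⟩ h
        simp only [Prod.mk.injEq] at h
        exact Prod.ext h.1.1 h.2
      by_cases hv : v = qf x'
      · rw [if_pos hv, hcomp, hv]
        exact prb_comp_inj (pair Z X) hinj (z, x')
      · rw [if_neg hv, hcomp]
        apply prb_comp_not_range
        rintro ⟨⟨z1, x1⟩, hp⟩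
        simp only [Prod.mk.injEq] at hp
        exact hv (by rw [← hp.1.2, hp.2])
    have eV : ∀ (v : 𝒳), prb μ V v = ∑ x', (if v = qf x' then prb μ X x' else 0) := by
      intro v
      rw [prb_marg_left hV hX v]
      refine Finset.sum_congr rfl fun x' _ => ?_
      have hcomp : pair V X = (fun x'' : 𝒳 => (qf x'', x'')) ∘ X := rfl
      have hinj : Function.Injective (fun x'' : 𝒳 => (qf x'', x'')) :=
        fun a a' h => congrArg Prod.snd h
      by_cases hv : v = qf x'
      · rw [if_pos hv, hcomp, hv]
        exact prb_comp_inj X hinj x'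
      · rw [if_neg hv, hcomp]
        apply prb_comp_not_range
        rintro ⟨x1, hp⟩
        simp only [Prod.mk.injEq] at hp
        exact hv (by rw [← hp.1, hp.2])
    -- conditional independence of Z and X given V
    have hciXZV : cmi μ X Z V = 0 := by
      rw [cmi_eq_zero_iff hX hZ hV]
      intro x z v
      rw [eXZV, eXV, eZV, eV]
      by_cases hv : v = qf x
      · rw [if_pos hv, if_pos hv, Finset.mul_sum, Finset.mul_sum]
        refine Finset.sum_congr rfl fun x' _ => ?_
        by_cases hv' : v = qf x'
        · rw [if_pos hv', if_pos hv', prXZ]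
          rcases hcross x x' ((hq_iff x x').mp (by rw [← hv, ← hv'])) with heq | ⟨_, _, h3⟩
          · rw [heq]; ring
          · linear_combination h3 z
        · rw [if_neg hv', if_neg hv', mul_zero, mul_zero]
      · rw [if_neg hv, if_neg hv, zero_mul, zero_mul]
    -- entropy identities with V
    have eXV' : ent μ (pair X V) = ent μ X := by
      have hcomp : pair X V = (fun x => (x, qf x)) ∘ X := rfl
      rw [hcomp, ent_comp_inj X (inj_graph qf)]
    have eXZV' : ent μ (pair (pair X Z) V) = ent μ (pair X Z) := by
      have hcomp : pair (pair X Z) V = (fun p : 𝒳 × 𝒵 => (p, qf p.1)) ∘ pair X Z := rfl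
      rw [hcomp, ent_comp_inj (pair X Z) (fun p p' h => congrArg Prod.fst h)]
    have halg1 : ent μ (pair Z V) = ent μ (pair X Z) + ent μ V - ent μ X := by
      have h := hciXZV
      unfold cmi at h
      rw [eXV', eXZV'] at h
      linarith
    have hXZent : ent μ (pair X Z) = ent μ Z + ent μ (pair X Y) - ent μ Y := by
      have h1 := hc1; have h2 := hc2
      unfold cmi at h1 h2
      have r1 : ent μ (pair (pair Z X) Y) = ent μ (pair (pair X Y) Z) := by
        have hcomp : pair (pair Z X) Y
            = (fun w : (𝒳 × 𝒴) × 𝒵 => ((w.2, w.1.1), w.1.2)) ∘ pair (pair X Y) Z := rfl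
        have hinj : Function.Injective
            (fun w : (𝒳 × 𝒴) × 𝒵 => ((w.2, w.1.1), w.1.2) : (𝒳 × 𝒴) × 𝒵 → (𝒵 × 𝒳) × 𝒴) := by
          rintro ⟨⟨x1, y1⟩, z1⟩ ⟨⟨x2, y2⟩, z2⟩ h
          simp_all [Prod.ext_iff]
        rw [hcomp, ent_comp_inj _ hinj]
      have r2 : ent μ (pair Z Y) = ent μ (pair Y Z) := ent_pair_comm Y Z
      rw [r1, r2] at h2
      linarith
    -- the chain of inequalities
    have hZle : ent μ Z ≤ ent μ (pair Z V) := ent_le_ent_pair hZ hV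
    have hVleW : ent μ V ≤ ent μ W := by
      have hgV : ∃ g' : 𝒴 → 𝒳, ∀ᵐ ω ∂μ, V ω = g' (Y ω) := by
        refine ⟨fun y => if h : ∃ x', 0 < prb μ (pair X Y) (x', y) then qf h.choose
          else Classical.arbitrary 𝒳, ?_⟩
        filter_upwards [ae_prb_pos (pair X Y)] with ω hω
        have hex : ∃ x', 0 < prb μ (pair X Y) (x', Y ω) := ⟨X ω, hω⟩
        rw [dif_pos hex]
        exact (hq_iff (X ω) hex.choose).mpr
          (Relation.EqvGen.rel _ _ ⟨Y ω, hω, hex.choose_spec⟩)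
      obtain ⟨h, hh⟩ := hmax 𝒳 inferInstance V ⟨qf, ae_of_all μ (fun ω => rfl)⟩ hgV
      calc ent μ V = ent μ (h ∘ W) := ent_congr hh
        _ ≤ ent μ W := ent_comp_le hW h
    have hWle : ent μ W ≤ mi μ X Y := by
      have hnn := cmi_nonneg (μ := μ) hX hY hW
      rw [key] at hnn
      linarith
    have hmile : mi μ X Y ≤ ent μ W := by
      have hmi_eq : mi μ X Y = ent μ Z + ent μ V - ent μ (pair Z V) := by
        unfold mi
        linarith [hXZent, halg1]
      linarith [hZle, hVleW]
    exact le_antisymm hWle hmile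


  tfae_finish


end SecureComputation
end

section
/- Let κ be a primitive from 𝒜 × ℬ to 𝒰 × 𝒱 that fails the completeness condition. Let A, B, Z be finite-valued random variables on a probability space with I[A;B|Z] = 0, and let (U,V) be generated by one use of κ with inputs (A,B) and side information Z. Then the pair (⟨Z,A,U⟩, ⟨Z,B,V⟩) is trivial. -/
open MeasureTheory Real
open scoped ENNReal

namespace SecureComputation

variable {Ω : Type*} [MeasurableSpace Ω]

/-- `(U,V)` is generated by one use of the primitive `κ` with inputs `(A,B)` and
side information `T`. -/
def GeneratedBy {𝒜 ℬ 𝒰 𝒱 𝒯 : Type*} (μ : Measure Ω) (κ : 𝒜 × ℬ → PMF (𝒰 × 𝒱))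
    (A : Ω → 𝒜) (B : Ω → ℬ) (U : Ω → 𝒰) (V : Ω → 𝒱) (T : Ω → 𝒯) : Prop :=
  ∀ (t : 𝒯) (a : 𝒜) (b : ℬ) (u : 𝒰) (v : 𝒱),
    μ {ω | T ω = t ∧ A ω = a ∧ B ω = b ∧ U ω = u ∧ V ω = v} =
      μ {ω | T ω = t ∧ A ω = a ∧ B ω = b} * κ (a, b) (u, v)

/-- The primitive `κ` fails the completeness condition: whenever its inputs are
independent and uniformly distributed and `(U,V)` is generated by one use of `κ`
(with constant side information), the pair `(⟨A,U⟩, ⟨B,V⟩)` is trivial. -/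
def FailsCompleteness {𝒜 ℬ 𝒰 𝒱 : Type} (κ : 𝒜 × ℬ → PMF (𝒰 × 𝒱)) : Prop :=
  ∀ (Ω' : Type) (_ : MeasurableSpace Ω') (μ : Measure Ω'), IsProbabilityMeasure μ →
    ∀ (A : Ω' → 𝒜) (B : Ω' → ℬ) (U : Ω' → 𝒰) (V : Ω' → 𝒱),
      DiscreteRV A → DiscreteRV B → DiscreteRV U → DiscreteRV V →
      (∀ (a : 𝒜) (b : ℬ), μ {ω | A ω = a ∧ B ω = b} =
        ((Nat.card 𝒜 : ℝ≥0∞) * (Nat.card ℬ : ℝ≥0∞))⁻¹) →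
      GeneratedBy μ κ A B U V (fun _ => ()) →
      IsTrivialPair μ (pair A U) (pair B V)

set_option linter.unusedSectionVars false
open scoped Classical


section Core
variable {W X Y Z : Type*} [Fintype W] [Fintype X] [Fintype Y] [Fintype Z]

noncomputable def pm (P : W → ℝ) (f : W → X) (x : X) : ℝ :=
  ∑ w, if f w = x then P w else 0

lemma pm_nonneg {P : W → ℝ} (hP : ∀ w, 0 ≤ P w) (f : W → X) (x : X) : 0 ≤ pm P f x :=
  Finset.sum_nonneg fun w _ => by split <;> simp [hP w]

lemma sum_pm (P : W → ℝ) (f : W → X) : ∑ x, pm P f x = ∑ w, P w := by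
  unfold pm
  rw [Finset.sum_comm]
  exact Finset.sum_congr rfl fun w _ => by simp

lemma pm_marg_right (P : W → ℝ) (f : W → X) (h : W → Z) (z : Z) :
    ∑ x, pm P (fun w => (f w, h w)) (x, z) = pm P h z := by
  unfold pm
  rw [Finset.sum_comm]
  refine Finset.sum_congr rfl fun w _ => ?_
  by_cases h2 : h w = z <;> simp [Prod.ext_iff, h2]

lemma pm_marg_left (P : W → ℝ) (f : W → X) (h : W → Z) (x : X) :
    ∑ z, pm P (fun w => (f w, h w)) (x, z) = pm P f x := by
  unfold pm
  rw [Finset.sum_comm]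
  refine Finset.sum_congr rfl fun w _ => ?_
  by_cases h1 : f w = x <;> simp [Prod.ext_iff, h1]

lemma pm_marg_mid (P : W → ℝ) (f : W → X) (g : W → Y) (h : W → Z) (x : X) (z : Z) :
    ∑ y, pm P (fun w => ((f w, g w), h w)) ((x, y), z)
      = pm P (fun w => (f w, h w)) (x, z) := by
  unfold pm
  rw [Finset.sum_comm]
  refine Finset.sum_congr rfl fun w _ => ?_
  by_cases h1 : f w = x <;> by_cases h2 : h w = z <;> simp [Prod.ext_iff, h1, h2]

lemma pm_marg_fst (P : W → ℝ) (f : W → X) (g : W → Y) (h : W → Z) (y : Y) (z : Z) :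
    ∑ x, pm P (fun w => ((f w, g w), h w)) ((x, y), z)
      = pm P (fun w => (g w, h w)) (y, z) := by
  unfold pm
  rw [Finset.sum_comm]
  refine Finset.sum_congr rfl fun w _ => ?_
  by_cases h1 : g w = y <;> by_cases h2 : h w = z <;> simp [Prod.ext_iff, h1, h2]


noncomputable def entP (P : W → ℝ) (f : W → X) : ℝ := ∑ x, negMulLog (pm P f x)

noncomputable def cmiP (P : W → ℝ) (f : W → X) (g : W → Y) (h : W → Z) : ℝ :=
  entP P (fun w => (f w, h w)) + entP P (fun w => (g w, h w))
    - entP P (fun w => ((f w, g w), h w)) - entP P h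

lemma pm_le_pm {P : W → ℝ} (hP : ∀ w, 0 ≤ P w) {f : W → X} {g : W → Y}
    {x : X} {y : Y} (hle : ∀ w, f w = x → g w = y) :
    pm P f x ≤ pm P g y := by
  refine Finset.sum_le_sum fun w _ => ?_
  by_cases h1 : f w = x
  · simp [h1, hle w h1]
  · by_cases h2 : g w = y <;> simp [h1, h2, hP w]

lemma sum3_cyc (F : X → Y → Z → ℝ) :
    ∑ x, ∑ y, ∑ z, F x y z = ∑ y, ∑ z, ∑ x, F x y z := by
  rw [Finset.sum_comm]
  exact Finset.sum_congr rfl fun y _ => Finset.sum_comm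

lemma sum3_rot (F : X → Y → Z → ℝ) :
    ∑ x, ∑ y, ∑ z, F x y z = ∑ z, ∑ x, ∑ y, F x y z := by
  have h1 : ∀ x, ∑ y, ∑ z, F x y z = ∑ z, ∑ y, F x y z := fun _ => Finset.sum_comm
  simp_rw [h1]
  rw [Finset.sum_comm]

/-- The fundamental expansion of conditional mutual information. -/
lemma cmiP_expand (P : W → ℝ) (f : W → X) (g : W → Y) (h : W → Z) :
    cmiP P f g h = ∑ x, ∑ y, ∑ z,
      pm P (fun w => ((f w, g w), h w)) ((x, y), z) *
        (log (pm P (fun w => ((f w, g w), h w)) ((x, y), z)) + log (pm P h z)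
          - log (pm P (fun w => (f w, h w)) (x, z))
          - log (pm P (fun w => (g w, h w)) (y, z))) := by
  set a : X → Y → Z → ℝ := fun x y z => pm P (fun w => ((f w, g w), h w)) ((x, y), z) with ha
  set b : X → Z → ℝ := fun x z => pm P (fun w => (f w, h w)) (x, z) with hb
  set c : Y → Z → ℝ := fun y z => pm P (fun w => (g w, h w)) (y, z) with hc
  set e : Z → ℝ := fun z => pm P h z with he
  have hab : ∀ x z, ∑ y, a x y z = b x z := fun x z => pm_marg_mid P f g h x z
  have hac : ∀ y z, ∑ x, a x y z = c y z := fun y z => pm_marg_fst P f g h y z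
  have hbe : ∀ z, ∑ x, b x z = e z := fun z => pm_marg_right P f h z
  have e1 : entP P (fun w => (f w, h w)) = ∑ x, ∑ z, negMulLog (b x z) := by
    rw [entP, Fintype.sum_prod_type]
  have e2 : entP P (fun w => (g w, h w)) = ∑ y, ∑ z, negMulLog (c y z) := by
    rw [entP, Fintype.sum_prod_type]
  have e3 : entP P (fun w => ((f w, g w), h w))
      = ∑ x, ∑ y, ∑ z, negMulLog (a x y z) := by
    rw [entP, Fintype.sum_prod_type, Fintype.sum_prod_type]
  have e4 : entP P h = ∑ z, negMulLog (e z) := rfl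
  -- rewrite each entropy as a triple sum of a * log(...)
  have r1 : ∑ x, ∑ z, negMulLog (b x z) = -∑ x, ∑ y, ∑ z, a x y z * log (b x z) := by
    rw [← Finset.sum_neg_distrib]
    refine Finset.sum_congr rfl fun x _ => ?_
    rw [Finset.sum_comm, ← Finset.sum_neg_distrib]
    refine Finset.sum_congr rfl fun z _ => ?_
    have h' : b x z * log (b x z) = ∑ y, a x y z * log (b x z) := by
      rw [← Finset.sum_mul, hab]
    rw [negMulLog, neg_mul, h']
  have r2 : ∑ y, ∑ z, negMulLog (c y z) = -∑ x, ∑ y, ∑ z, a x y z * log (c y z) := by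
    rw [sum3_cyc, ← Finset.sum_neg_distrib]
    refine Finset.sum_congr rfl fun y _ => ?_
    rw [← Finset.sum_neg_distrib]
    refine Finset.sum_congr rfl fun z _ => ?_
    have h' : c y z * log (c y z) = ∑ x, a x y z * log (c y z) := by
      rw [← Finset.sum_mul, hac]
    rw [negMulLog, neg_mul, h']
  have r3 : ∑ x, ∑ y, ∑ z, negMulLog (a x y z) = -∑ x, ∑ y, ∑ z, a x y z * log (a x y z) := by
    simp [negMulLog, Finset.sum_neg_distrib]
  have r4 : ∑ z, negMulLog (e z) = -∑ x, ∑ y, ∑ z, a x y z * log (e z) := by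
    rw [sum3_rot, ← Finset.sum_neg_distrib]
    refine Finset.sum_congr rfl fun z _ => ?_
    have h' : e z * log (e z) = ∑ x, ∑ y, a x y z * log (e z) := by
      rw [← hbe z, Finset.sum_mul]
      refine Finset.sum_congr rfl fun x _ => ?_
      rw [← hab x z, Finset.sum_mul]
    rw [negMulLog, neg_mul, h']
  rw [cmiP, e1, e2, e3, e4, r1, r2, r3, r4]
  simp only [mul_add, mul_sub, Finset.sum_add_distrib, Finset.sum_sub_distrib]
  ring

lemma key_ineq {a b c e : ℝ} (ha : 0 ≤ a) (hab : a ≤ b) (hac : a ≤ c)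
    (hbe : b ≤ e) (hce : c ≤ e) :
    0 ≤ b * c * e⁻¹ - a + a * (log a + log e - log b - log c) ∧
      (b * c * e⁻¹ - a + a * (log a + log e - log b - log c) = 0 → a * e = b * c) := by
  have hb0 : 0 ≤ b := ha.trans hab
  have hc0 : 0 ≤ c := ha.trans hac
  have he0 : 0 ≤ e := hb0.trans hbe
  by_cases he : e = 0
  · have hbz : b = 0 := le_antisymm (he ▸ hbe) hb0
    have haz : a = 0 := le_antisymm (hbz ▸ hab) ha
    simp [he, hbz, haz]
  · have he' : 0 < e := lt_of_le_of_ne he0 (Ne.symm he)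
    by_cases haz : a = 0
    · subst haz
      constructor
      · simp only [sub_zero, zero_mul, add_zero]
        positivity
      · intro h0
        simp only [sub_zero, zero_mul, add_zero] at h0
        have : b * c = 0 := by
          field_simp at h0
          simpa using h0
        simp [this]
    · have ha' : 0 < a := lt_of_le_of_ne ha (Ne.symm haz)
      have hb' : 0 < b := lt_of_lt_of_le ha' hab
      have hc' : 0 < c := lt_of_lt_of_le ha' hac
      set t : ℝ := b * c / (a * e) with htdef
      have ht : 0 < t := by positivity
      have hlogt : log t = log b + log c - log a - log e := by
        rw [htdef, log_div (mul_pos hb' hc').ne' (mul_pos ha' he').ne',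
          log_mul hb'.ne' hc'.ne', log_mul ha'.ne' he'.ne']
        ring
      have hat : a * t = b * c * e⁻¹ := by
        rw [htdef]; field_simp
      have hexpr : b * c * e⁻¹ - a + a * (log a + log e - log b - log c)
          = a * (t - 1 - log t) := by
        rw [hlogt, ← hat]; ring
      rw [hexpr]
      constructor
      · have := log_le_sub_one_of_pos ht
        have h1 : 0 ≤ t - 1 - log t := by linarith
        positivity
      · intro h0
        have h1 : t - 1 - log t = 0 := by
          rcases mul_eq_zero.1 h0 with h | h
          · exact absurd h haz
          · exact h
        have ht1 : t = 1 := by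
          by_contra hne
          have := log_lt_sub_one_of_pos ht hne
          linarith
        have : b * c = a * e := by
          have hae : a * e ≠ 0 := by positivity
          rw [htdef, div_eq_one_iff_eq hae] at ht1
          exact ht1
        linarith

theorem cmiP_eq_zero_iff (P : W → ℝ) (hP : ∀ w, 0 ≤ P w) (hsum : ∑ w, P w = 1)
    (f : W → X) (g : W → Y) (h : W → Z) :
    cmiP P f g h = 0 ↔ ∀ x y z,
      pm P (fun w => ((f w, g w), h w)) ((x, y), z) * pm P h z
        = pm P (fun w => (f w, h w)) (x, z) * pm P (fun w => (g w, h w)) (y, z) := by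
  set a : X → Y → Z → ℝ := fun x y z => pm P (fun w => ((f w, g w), h w)) ((x, y), z) with hadef
  set b : X → Z → ℝ := fun x z => pm P (fun w => (f w, h w)) (x, z) with hbdef
  set c : Y → Z → ℝ := fun y z => pm P (fun w => (g w, h w)) (y, z) with hcdef
  set e : Z → ℝ := fun z => pm P h z with hedef
  have hann : ∀ x y z, 0 ≤ a x y z := fun x y z => pm_nonneg hP _ _
  have hab : ∀ x y z, a x y z ≤ b x z := by
    intro x y z
    refine pm_le_pm hP ?_
    intro w hw
    simp only [Prod.mk.injEq] at hw ⊢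
    exact ⟨hw.1.1, hw.2⟩
  have hac : ∀ x y z, a x y z ≤ c y z := by
    intro x y z
    refine pm_le_pm hP ?_
    intro w hw
    simp only [Prod.mk.injEq] at hw ⊢
    exact ⟨hw.1.2, hw.2⟩
  have hbe : ∀ x z, b x z ≤ e z := by
    intro x z
    refine pm_le_pm hP ?_
    intro w hw
    simp only [Prod.mk.injEq] at hw
    exact hw.2
  have hce : ∀ y z, c y z ≤ e z := by
    intro y z
    refine pm_le_pm hP ?_
    intro w hw
    simp only [Prod.mk.injEq] at hw
    exact hw.2
  have hmb : ∀ x z, ∑ y, a x y z = b x z := fun x z => pm_marg_mid P f g h x z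
  have hmc : ∀ y z, ∑ x, a x y z = c y z := fun y z => pm_marg_fst P f g h y z
  have hme : ∀ z, ∑ x, b x z = e z := fun z => pm_marg_right P f h z
  have hmce : ∀ z, ∑ y, c y z = e z := fun z => pm_marg_right P g h z
  have hetot : ∑ z, e z = 1 := by
    have : ∑ z, pm P h z = ∑ w, P w := sum_pm P h
    rw [hedef]
    rw [this, hsum]
  have hatot : ∑ x, ∑ y, ∑ z, a x y z = 1 := by
    have h1 : ∀ x, ∑ y, ∑ z, a x y z = ∑ z, b x z := by
      intro x
      rw [Finset.sum_comm]
      exact Finset.sum_congr rfl fun z _ => hmb x z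
    simp_rw [h1]
    rw [Finset.sum_comm]
    simp_rw [hme]
    exact hetot
  have hbctot : ∑ x, ∑ y, ∑ z, b x z * c y z * (e z)⁻¹ = 1 := by
    rw [sum3_rot]
    have h1 : ∀ z, ∑ x, ∑ y, b x z * c y z * (e z)⁻¹ = e z := by
      intro z
      have hx : ∀ x, ∑ y, b x z * c y z * (e z)⁻¹ = b x z * (e z * (e z)⁻¹) := by
        intro x
        have : ∀ y, b x z * c y z * (e z)⁻¹ = b x z * (c y z * (e z)⁻¹) := fun y => by ring
        simp_rw [this, ← Finset.mul_sum, ← Finset.sum_mul, hmce z]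
      simp_rw [hx]
      rw [← Finset.sum_mul, hme z]
      by_cases hez : e z = 0
      · simp [hez]
      · field_simp
    simp_rw [h1]
    exact hetot
  have hexp : cmiP P f g h = ∑ x, ∑ y, ∑ z,
      a x y z * (log (a x y z) + log (e z) - log (b x z) - log (c y z)) :=
    cmiP_expand P f g h
  constructor
  · -- cmi = 0 implies factorization
    intro hcmi x y z
    show a x y z * e z = b x z * c y z
    rw [hcmi] at hexp
    have hGnn : ∀ x y z, 0 ≤ b x z * c y z * (e z)⁻¹ - a x y z
        + a x y z * (log (a x y z) + log (e z) - log (b x z) - log (c y z)) := fun x y z =>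
      (key_ineq (hann x y z) (hab x y z) (hac x y z) (hbe x z) (hce y z)).1
    have hGsum : ∑ x, ∑ y, ∑ z, (b x z * c y z * (e z)⁻¹ - a x y z
        + a x y z * (log (a x y z) + log (e z) - log (b x z) - log (c y z))) = 0 := by
      simp only [Finset.sum_add_distrib, Finset.sum_sub_distrib]
      rw [hbctot, hatot, ← hexp]
      ring
    have hG0 : b x z * c y z * (e z)⁻¹ - a x y z
        + a x y z * (log (a x y z) + log (e z) - log (b x z) - log (c y z)) = 0 := by
      have h1 : ∀ x ∈ Finset.univ (α := X), (0:ℝ) ≤ ∑ y, ∑ z, (b x z * c y z * (e z)⁻¹ - a x y z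
          + a x y z * (log (a x y z) + log (e z) - log (b x z) - log (c y z))) := fun x _ =>
        Finset.sum_nonneg fun y _ => Finset.sum_nonneg fun z _ => hGnn x y z
      have h2 := (Finset.sum_eq_zero_iff_of_nonneg h1).1 hGsum x (Finset.mem_univ x)
      have h3 : ∀ y ∈ Finset.univ (α := Y), (0:ℝ) ≤ ∑ z, (b x z * c y z * (e z)⁻¹ - a x y z
          + a x y z * (log (a x y z) + log (e z) - log (b x z) - log (c y z))) := fun y _ =>
        Finset.sum_nonneg fun z _ => hGnn x y z
      have h4 := (Finset.sum_eq_zero_iff_of_nonneg h3).1 h2 y (Finset.mem_univ y)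
      exact (Finset.sum_eq_zero_iff_of_nonneg
        (fun z _ => hGnn x y z)).1 h4 z (Finset.mem_univ z)
    exact (key_ineq (hann x y z) (hab x y z) (hac x y z) (hbe x z) (hce y z)).2 hG0
  · -- factorization implies cmi = 0
    intro hfact
    rw [hexp]
    refine Finset.sum_eq_zero fun x _ => Finset.sum_eq_zero fun y _ =>
      Finset.sum_eq_zero fun z _ => ?_
    have hf : a x y z * e z = b x z * c y z := hfact x y z
    rcases eq_or_lt_of_le (hann x y z) with h0 | hpos
    · rw [← h0]; ring
    · have hb' : 0 < b x z := lt_of_lt_of_le hpos (hab x y z)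
      have hc' : 0 < c y z := lt_of_lt_of_le hpos (hac x y z)
      have he' : 0 < e z := lt_of_lt_of_le hb' (hbe x z)
      have hl : log (a x y z) + log (e z) = log (b x z) + log (c y z) := by
        rw [← log_mul hpos.ne' he'.ne', ← log_mul hb'.ne' hc'.ne', hf]
      have hz : log (a x y z) + log (e z) - log (b x z) - log (c y z) = 0 := by linarith
      rw [hz, mul_zero]


end Core

section Bridge

variable {W : Type*} [Fintype W] {X Y Z' : Type*} [Fintype X] [Fintype Y] [Fintype Z']

lemma DiscreteRV.pair'_s8 {X Y : Type*} {f : Ω → X} {g : Ω → Y}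
    (hf : DiscreteRV f) (hg : DiscreteRV g) : DiscreteRV (fun ω => (f ω, g ω)) := by
  intro p
  have : (fun ω => (f ω, g ω)) ⁻¹' {p} = f ⁻¹' {p.1} ∩ g ⁻¹' {p.2} := by
    ext ω
    simp [Prod.ext_iff]
  rw [this]
  exact (hf p.1).inter (hg p.2)

lemma DiscreteRV.comp {G : Ω → W} (hG : DiscreteRV G) (f : W → X) :
    DiscreteRV (f ∘ G) := by
  intro x
  classical
  have hset : (f ∘ G) ⁻¹' {x} = ⋃ w ∈ Finset.univ.filter (fun w => f w = x), G ⁻¹' {w} := by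
    ext ω
    simp only [Set.mem_preimage, Function.comp_apply, Set.mem_singleton_iff,
      Set.mem_iUnion, Finset.mem_filter, Finset.mem_univ, true_and]
    constructor
    · intro h
      exact ⟨G ω, h, rfl⟩
    · rintro ⟨w, hw, hGw⟩
      rw [hGw]
      exact hw
  rw [hset]
  exact (Finset.univ.filter (fun w => f w = x)).measurableSet_biUnion fun w _ => hG w

lemma pm_eq_measure (μ : Measure Ω) [IsFiniteMeasure μ]
    (G : Ω → W) (hG : DiscreteRV G) (f : W → X) (x : X) :
    pm (fun w => (μ (G ⁻¹' {w})).toReal) f x = (μ ((f ∘ G) ⁻¹' {x})).toReal := by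
  classical
  have hset : (f ∘ G) ⁻¹' {x} = ⋃ w ∈ Finset.univ.filter (fun w => f w = x), G ⁻¹' {w} := by
    ext ω
    simp only [Set.mem_preimage, Function.comp_apply, Set.mem_singleton_iff,
      Set.mem_iUnion, Finset.mem_filter, Finset.mem_univ, true_and]
    constructor
    · intro h
      exact ⟨G ω, h, rfl⟩
    · rintro ⟨w, hw, hGw⟩
      rw [hGw]
      exact hw
  have hdisj : (↑(Finset.univ.filter (fun w => f w = x)) : Set W).PairwiseDisjoint
      (fun w => G ⁻¹' {w}) := by
    intro w1 _ w2 _ hne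
    simp only [Function.onFun]
    rw [Set.disjoint_left]
    intro ω h1 h2
    exact hne (by rw [← h1, ← h2])
  have hmeas : ∀ w ∈ Finset.univ.filter (fun w => f w = x), MeasurableSet (G ⁻¹' {w}) :=
    fun w _ => hG w
  rw [hset, measure_biUnion_finset hdisj hmeas, ENNReal.toReal_sum
    (fun w _ => measure_ne_top μ _)]
  rw [pm, ← Finset.sum_filter]

lemma ent_eq_entP (μ : Measure Ω) [IsFiniteMeasure μ]
    (G : Ω → W) (hG : DiscreteRV G) (f : W → X) :
    ent μ (f ∘ G) = entP (fun w => (μ (G ⁻¹' {w})).toReal) f := by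
  rw [ent, tsum_fintype, entP]
  exact Finset.sum_congr rfl fun x _ => by rw [pm_eq_measure μ G hG f x]

lemma cmi_eq_cmiP (μ : Measure Ω) [IsFiniteMeasure μ]
    (G : Ω → W) (hG : DiscreteRV G) (f : W → X) (g : W → Y) (h : W → Z') :
    cmi μ (f ∘ G) (g ∘ G) (h ∘ G) = cmiP (fun w => (μ (G ⁻¹' {w})).toReal) f g h := by
  rw [cmi, cmiP]
  rw [show pair (f ∘ G) (h ∘ G) = (fun w => (f w, h w)) ∘ G from rfl]
  rw [show pair (g ∘ G) (h ∘ G) = (fun w => (g w, h w)) ∘ G from rfl]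
  rw [show pair (pair (f ∘ G) (g ∘ G)) (h ∘ G) = (fun w => ((f w, g w), h w)) ∘ G from rfl]
  rw [ent_eq_entP μ G hG, ent_eq_entP μ G hG, ent_eq_entP μ G hG]
  rw [show h ∘ G = h ∘ G from rfl, ent_eq_entP μ G hG]

end Bridge


section AE
variable {W S X Y : Type*} [Fintype W] [Fintype S] [Fintype X] [Fintype Y]

lemma pm_tau_left (p : W → ℝ) (τ : W → S) (f : W → X) (e : X → S)
    (hae : ∀ w, p w ≠ 0 → τ w = e (f w)) (t : S) (x : X) :
    pm p (fun w => (τ w, f w)) (t, x) = if e x = t then pm p f x else 0 := by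
  simp only [pm]
  rw [show (if e x = t then ∑ w, if f w = x then p w else 0 else 0)
      = ∑ w, if e x = t then (if f w = x then p w else 0) else 0 by split <;> simp]
  refine Finset.sum_congr rfl fun w _ => ?_
  by_cases hp : p w = 0
  · split_ifs <;> simp [hp]
  · have hτ := hae w hp
    by_cases hf : f w = x
    · subst hf
      by_cases he : e (f w) = t <;> simp [Prod.ext_iff, he, hτ]
    · simp [Prod.ext_iff, hf]

lemma pm_tau_snd (p : W → ℝ) (τ : W → S) (f : W → X) (e : X → S)
    (hae : ∀ w, p w ≠ 0 → τ w = e (f w)) (x : X) (t : S) :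
    pm p (fun w => (f w, τ w)) (x, t) = if e x = t then pm p f x else 0 := by
  by_cases he : e x = t
  · simp only [pm, if_pos he]
    refine Finset.sum_congr rfl fun w _ => ?_
    by_cases hp : p w = 0
    · split_ifs <;> simp [hp]
    · by_cases hf : f w = x
      · simp [Prod.ext_iff, hf, hae w hp, he]
      · simp [Prod.ext_iff, hf]
  · simp only [pm, if_neg he]
    refine Finset.sum_eq_zero fun w _ => ?_
    by_cases hp : p w = 0
    · split_ifs <;> simp [hp]
    · by_cases hc : (f w, τ w) = (x, t)
      · exfalso
        simp only [Prod.mk.injEq] at hc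
        exact he (by rw [← hc.1, ← hae w hp, hc.2])
      · simp [hc]

lemma pm_tau_pair_left (p : W → ℝ) (τ : W → S) (f : W → X) (g : W → Y) (e : X → S)
    (hae : ∀ w, p w ≠ 0 → τ w = e (f w)) (t : S) (y : Y) (x : X) :
    pm p (fun w => ((τ w, g w), f w)) ((t, y), x)
      = if e x = t then pm p (fun w => (g w, f w)) (y, x) else 0 := by
  by_cases he : e x = t
  · simp only [pm, if_pos he]
    refine Finset.sum_congr rfl fun w _ => ?_
    by_cases hp : p w = 0
    · split_ifs <;> simp [hp]
    · by_cases hf : f w = x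
      · by_cases hg : g w = y
        · simp [Prod.ext_iff, hf, hg, hae w hp, he]
        · simp [Prod.ext_iff, hg]
      · simp [Prod.ext_iff, hf]
  · simp only [pm, if_neg he]
    refine Finset.sum_eq_zero fun w _ => ?_
    by_cases hp : p w = 0
    · split_ifs <;> simp [hp]
    · by_cases hc : ((τ w, g w), f w) = ((t, y), x)
      · exfalso
        simp only [Prod.mk.injEq] at hc
        exact he (by rw [← hc.2, ← hae w hp, hc.1.1])
      · simp [hc]

lemma pm_tau_right (p : W → ℝ) (τ : W → S) (f : W → X) (g : W → Y) (e : X → S)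
    (hae : ∀ w, p w ≠ 0 → τ w = e (f w)) (x : X) (y : Y) (t : S) :
    pm p (fun w => ((f w, g w), τ w)) ((x, y), t)
      = if e x = t then pm p (fun w => (f w, g w)) (x, y) else 0 := by
  by_cases he : e x = t
  · simp only [pm, if_pos he]
    refine Finset.sum_congr rfl fun w _ => ?_
    by_cases hp : p w = 0
    · split_ifs <;> simp [hp]
    · by_cases hf : f w = x
      · by_cases hg : g w = y
        · simp [Prod.ext_iff, hf, hg, hae w hp, he]
        · simp [Prod.ext_iff, hg]
      · simp [Prod.ext_iff, hf]
  · simp only [pm, if_neg he]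
    refine Finset.sum_eq_zero fun w _ => ?_
    by_cases hp : p w = 0
    · split_ifs <;> simp [hp]
    · by_cases hc : ((f w, g w), τ w) = ((x, y), t)
      · exfalso
        simp only [Prod.mk.injEq] at hc
        exact he (by rw [← hc.1.1, ← hae w hp, hc.2])
      · simp [hc]

lemma pm_pair_zero (p : W → ℝ) (τ : W → S) (f : W → X) (g : W → Y) (e : X → S) (e' : Y → S)
    (hae : ∀ w, p w ≠ 0 → τ w = e (f w)) (hae' : ∀ w, p w ≠ 0 → τ w = e' (g w))
    {x : X} {y : Y} (hne : e x ≠ e' y) :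
    pm p (fun w => (f w, g w)) (x, y) = 0 := by
  refine Finset.sum_eq_zero fun w _ => ?_
  by_cases hp : p w = 0
  · split_ifs <;> simp [hp]
  · by_cases hf : (f w, g w) = (x, y)
    · exfalso
      simp only [Prod.mk.injEq] at hf
      exact hne (by rw [← hf.1, ← hf.2, ← hae w hp, ← hae' w hp])
    · simp [hf]

lemma fact_of_ae (p : W → ℝ) (τ : W → S) (f : W → X) (g : W → Y) (e : X → S)
    (hae : ∀ w, p w ≠ 0 → τ w = e (f w)) (t : S) (y : Y) (x : X) :
    pm p (fun w => ((τ w, g w), f w)) ((t, y), x) * pm p f x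
      = pm p (fun w => (τ w, f w)) (t, x) * pm p (fun w => (g w, f w)) (y, x) := by
  rw [pm_tau_pair_left p τ f g e hae, pm_tau_left p τ f e hae]
  split_ifs with h
  · ring
  · simp

lemma pm_comp' (p : W → ℝ) (f : W → X) (pj : X → S) (s : S) :
    pm p (fun w => pj (f w)) s = ∑ x, if pj x = s then pm p f x else 0 := by
  simp only [pm]
  simp_rw [show ∀ x, (if pj x = s then (∑ w, if f w = x then p w else 0) else 0)
      = ∑ w, if pj x = s then (if f w = x then p w else 0) else 0 from
    fun x => by split <;> simp]
  rw [Finset.sum_comm]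
  refine Finset.sum_congr rfl fun w _ => ?_
  rw [Finset.sum_eq_single (f w)]
  · simp
  · intro x _ hx
    simp [Ne.symm hx]
  · simp

lemma pm_ae_congr (p : W → ℝ) (τ : W → S) (σf : W → S)
    (hae : ∀ w, p w ≠ 0 → τ w = σf w) (s : S) : pm p τ s = pm p σf s := by
  refine Finset.sum_congr rfl fun w _ => ?_
  by_cases hp : p w = 0
  · split_ifs <;> simp [hp]
  · rw [hae w hp]

lemma single_le_pm (p : W → ℝ) (hp : ∀ w, 0 ≤ p w) (f : W → X) (w : W) (x : X)
    (hx : f w = x) : p w ≤ pm p f x := by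
  have h0 : p w = if f w = x then p w else 0 := by simp [hx]
  simp only [pm]
  rw [h0]
  exact Finset.single_le_sum (f := fun i => if f i = x then p i else 0)
    (fun i _ => by split <;> simp [hp i]) (Finset.mem_univ w)

/-- If `I[τ ; g | f] = 0` (in factorized form) and `(f,g)` jointly determine the point,
then `τ` is a.s. a function of `f`. -/
lemma tau_function_of (p : W → ℝ) (hp : ∀ w, 0 ≤ p w) (τ : W → S) (f : W → X) (g : W → Y)
    (hfg : ∀ w w', f w = f w' → g w = g w' → w = w')
    (hfact : ∀ t y x, pm p (fun w => ((τ w, g w), f w)) ((t, y), x) * pm p f x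
      = pm p (fun w => (τ w, f w)) (t, x) * pm p (fun w => (g w, f w)) (y, x)) :
    ∀ w w', p w ≠ 0 → p w' ≠ 0 → f w = f w' → τ w = τ w' := by
  intro w w' hw hw' hff
  have h1 := hfact (τ w') (g w) (f w)
  have e1 : pm p (fun w'' => ((τ w'', g w''), f w'')) ((τ w', g w), f w)
      = if τ w = τ w' then p w else 0 := by
    simp only [pm]
    rw [Finset.sum_eq_single w]
    · by_cases he : τ w = τ w' <;> simp [Prod.ext_iff, he]
    · intro w'' _ hne
      by_cases hc : ((τ w'', g w''), f w'') = ((τ w', g w), f w)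
      · exfalso
        simp only [Prod.mk.injEq] at hc
        exact hne (hfg w'' w hc.2 hc.1.2)
      · simp [hc]
    · simp
  have e2 : pm p (fun w'' => (g w'', f w'')) (g w, f w) = p w := by
    simp only [pm]
    rw [Finset.sum_eq_single w]
    · simp
    · intro w'' _ hne
      by_cases hc : (g w'', f w'') = (g w, f w)
      · exfalso
        simp only [Prod.mk.injEq] at hc
        exact hne (hfg w'' w hc.2 hc.1)
      · simp [hc]
    · simp
  have e3 : p w' ≤ pm p (fun w'' => (τ w'', f w'')) (τ w', f w) :=
    single_le_pm p hp _ w' _ (by simp [hff.symm])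
  rw [e1, e2] at h1
  by_contra hne
  rw [if_neg hne, zero_mul] at h1
  have hpw : 0 < p w := lt_of_le_of_ne (hp w) (Ne.symm hw)
  have hpw' : 0 < p w' := lt_of_le_of_ne (hp w') (Ne.symm hw')
  have : 0 < pm p (fun w'' => (τ w'', f w'')) (τ w', f w) * p w :=
    mul_pos (lt_of_lt_of_le hpw' e3) hpw
  rw [← h1] at this
  exact lt_irrefl 0 this

end AE

section Product
variable {X₀ Y₀ S : Type*} [Fintype X₀] [Fintype Y₀] [Fintype S]

/-- Conditional independence given the common part transfers from the reference
distribution `pg` to any reweighting by a product of weights. -/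
lemma product_transfer (pg : X₀ × Y₀ → ℝ) (hpg : ∀ q, 0 ≤ pg q)
    (c : X₀ → S) (d : Y₀ → S)
    (hS1 : ∀ x y, pg (x, y) ≠ 0 → c x = d y)
    (hS2 : ∀ x y, c x = d y →
      pg (x, y) * (∑ x', if c x' = c x then (∑ y', pg (x', y')) else 0)
        = (∑ y', pg (x, y')) * (∑ x', pg (x', y)))
    (aw : X₀ → ℝ) (bw : Y₀ → ℝ)
    (haw : ∀ x, 0 ≤ aw x) (hbw : ∀ y, 0 ≤ bw y) :
    ∀ x y, c x = d y →
      (aw x * bw y * pg (x, y)) *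
        (∑ x', if c x' = c x then (∑ y', aw x' * bw y' * pg (x', y')) else 0)
      = (∑ y', aw x * bw y' * pg (x, y')) * (∑ x', aw x' * bw y * pg (x', y)) := by
  classical
  set Φ : X₀ → ℝ := fun x => ∑ y', pg (x, y') with hΦ
  set Ψ : Y₀ → ℝ := fun y => ∑ x', pg (x', y) with hΨ
  set σ : S → ℝ := fun s => ∑ x', if c x' = s then Φ x' else 0 with hσ
  set ρ : X₀ → ℝ := fun x => ∑ y', bw y' * pg (x, y') with hρ
  set lam : Y₀ → ℝ := fun y => ∑ x', aw x' * pg (x', y) with hlam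
  set ΨB : S → ℝ := fun s => ∑ y', if d y' = s then bw y' * Ψ y' else 0 with hΨB
  set ΦA : S → ℝ := fun s => ∑ x', if c x' = s then aw x' * Φ x' else 0 with hΦA
  set M : S → ℝ := fun s => ∑ x', if c x' = s then aw x' * ρ x' else 0 with hM
  have hS2' : ∀ x y, c x = d y → pg (x, y) * σ (c x) = Φ x * Ψ y := hS2
  have hΦnn : ∀ x, 0 ≤ Φ x := fun x => Finset.sum_nonneg fun y' _ => hpg _
  have R1 : ∀ (s : S) (x0 : X₀), c x0 = s → σ s * ρ x0 = Φ x0 * ΨB s := by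
    intro s x0 hx0
    have step : ∀ y', σ s * (bw y' * pg (x0, y'))
        = if d y' = s then bw y' * (Φ x0 * Ψ y') else 0 := by
      intro y'
      by_cases hdy : d y' = s
      · have h2 := hS2' x0 y' (by rw [hx0, hdy])
        rw [hx0] at h2
        rw [if_pos hdy]
        linear_combination bw y' * h2
      · have hpg0 : pg (x0, y') = 0 := by
          by_contra hne
          exact hdy (by rw [← hS1 x0 y' hne, hx0])
        rw [if_neg hdy, hpg0]
        ring
    have expand : σ s * ρ x0 = ∑ y', σ s * (bw y' * pg (x0, y')) := by
      rw [show ρ x0 = ∑ y', bw y' * pg (x0, y') from rfl, Finset.mul_sum]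
    rw [expand]
    simp_rw [step]
    rw [show ΨB s = ∑ y', if d y' = s then bw y' * Ψ y' else 0 from rfl, Finset.mul_sum]
    refine Finset.sum_congr rfl fun y' _ => ?_
    split
    · ring
    · ring
  have R2 : ∀ (s : S) (y0 : Y₀), d y0 = s → σ s * lam y0 = Ψ y0 * ΦA s := by
    intro s y0 hy0
    have step : ∀ x', σ s * (aw x' * pg (x', y0))
        = if c x' = s then aw x' * (Φ x' * Ψ y0) else 0 := by
      intro x'
      by_cases hcx : c x' = s
      · have h2 := hS2' x' y0 (by rw [hcx, hy0])
        rw [hcx] at h2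
        rw [if_pos hcx]
        linear_combination aw x' * h2
      · have hpg0 : pg (x', y0) = 0 := by
          by_contra hne
          exact hcx (by rw [hS1 x' y0 hne, hy0])
        rw [if_neg hcx, hpg0]
        ring
    have expand : σ s * lam y0 = ∑ x', σ s * (aw x' * pg (x', y0)) := by
      rw [show lam y0 = ∑ x', aw x' * pg (x', y0) from rfl, Finset.mul_sum]
    rw [expand]
    simp_rw [step]
    rw [show ΦA s = ∑ x', if c x' = s then aw x' * Φ x' else 0 from rfl, Finset.mul_sum]
    refine Finset.sum_congr rfl fun x' _ => ?_
    split
    · ring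
    · ring
  have R3 : ∀ s : S, σ s * M s = ΦA s * ΨB s := by
    intro s
    have expand : σ s * M s = ∑ x', σ s * (if c x' = s then aw x' * ρ x' else 0) := by
      rw [show M s = ∑ x', if c x' = s then aw x' * ρ x' else 0 from rfl, Finset.mul_sum]
    rw [expand]
    have step : ∀ x', σ s * (if c x' = s then aw x' * ρ x' else 0)
        = if c x' = s then aw x' * (Φ x' * ΨB s) else 0 := by
      intro x'
      by_cases hcx : c x' = s
      · rw [if_pos hcx, if_pos hcx]
        have := R1 s x' hcx
        linear_combination aw x' * this
      · rw [if_neg hcx, if_neg hcx, mul_zero]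
    simp_rw [step]
    rw [show ΦA s = ∑ x', if c x' = s then aw x' * Φ x' else 0 from rfl, Finset.sum_mul]
    refine Finset.sum_congr rfl fun x' _ => ?_
    split
    · ring
    · simp
  intro x y hcd
  have hsum1 : ∑ y', aw x * bw y' * pg (x, y') = aw x * ρ x := by
    rw [show ρ x = ∑ y', bw y' * pg (x, y') from rfl, Finset.mul_sum]
    refine Finset.sum_congr rfl fun y' _ => by ring
  have hsum2 : ∑ x', aw x' * bw y * pg (x', y) = bw y * lam y := by
    rw [show lam y = ∑ x', aw x' * pg (x', y) from rfl, Finset.mul_sum]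
    refine Finset.sum_congr rfl fun x' _ => by ring
  have hsum3 : (∑ x', if c x' = c x then (∑ y', aw x' * bw y' * pg (x', y')) else 0)
      = M (c x) := by
    rw [show M (c x) = ∑ x', if c x' = c x then aw x' * ρ x' else 0 from rfl]
    refine Finset.sum_congr rfl fun x' _ => ?_
    split
    · rw [show ρ x' = ∑ y', bw y' * pg (x', y') from rfl, Finset.mul_sum]
      refine Finset.sum_congr rfl fun y' _ => by ring
    · rfl
  rw [hsum1, hsum2, hsum3]
  -- main identity : pg (x,y) * M (c x) = ρ x * lam y
  have H : pg (x, y) * M (c x) = ρ x * lam y := by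
    by_cases hσ0 : σ (c x) = 0
    · have hΦ0 : Φ x = 0 := by
        have hle : Φ x ≤ σ (c x) := by
          have h0 : Φ x = if c x = c x then Φ x else 0 := by simp
          rw [h0, show σ (c x) = ∑ x', if c x' = c x then Φ x' else 0 from rfl]
          exact Finset.single_le_sum (f := fun x' => if c x' = c x then Φ x' else 0)
            (fun i _ => by split <;> simp [hΦnn i]) (Finset.mem_univ x)
        exact le_antisymm (hσ0 ▸ hle) (hΦnn x)
      have hpg0 : ∀ y', pg (x, y') = 0 := by
        have := (Finset.sum_eq_zero_iff_of_nonneg (fun y' _ => hpg (x, y'))).1 hΦ0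
        exact fun y' => this y' (Finset.mem_univ y')
      have hρ0 : ρ x = 0 := by
        rw [show ρ x = ∑ y', bw y' * pg (x, y') from rfl]
        exact Finset.sum_eq_zero fun y' _ => by rw [hpg0 y', mul_zero]
      rw [hpg0 y, hρ0, zero_mul, zero_mul]
    · have e1 : pg (x, y) * σ (c x) = Φ x * Ψ y := hS2' x y hcd
      have e2 : σ (c x) * M (c x) = ΦA (c x) * ΨB (c x) := R3 (c x)
      have e3 : σ (c x) * ρ x = Φ x * ΨB (c x) := R1 (c x) x rfl
      have e4 : σ (c x) * lam y = Ψ y * ΦA (c x) := R2 (c x) y hcd.symm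
      have key : σ (c x) * (σ (c x) * (pg (x, y) * M (c x)))
          = σ (c x) * (σ (c x) * (ρ x * lam y)) := by
        linear_combination (σ (c x) * M (c x)) * e1 + (Φ x * Ψ y) * e2
          - (σ (c x) * lam y) * e3 - (Φ x * ΨB (c x)) * e4
      exact mul_left_cancel₀ hσ0 (mul_left_cancel₀ hσ0 key)
  linear_combination (aw x * bw y) * H

end Product

section Canonical
variable {𝒜 ℬ 𝒰 𝒱 : Type} [Fintype 𝒜] [Fintype ℬ] [Fintype 𝒰] [Fintype 𝒱]
  [Nonempty 𝒜] [Nonempty ℬ] [Nonempty 𝒰] [Nonempty 𝒱]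

/-- The reference joint distribution on `(𝒜 × 𝒰) × (ℬ × 𝒱)` induced by uniform
independent inputs fed into `κ`. -/
noncomputable def pgk (κ : 𝒜 × ℬ → PMF (𝒰 × 𝒱)) (q : (𝒜 × 𝒰) × (ℬ × 𝒱)) : ℝ :=
  (((Fintype.card 𝒜 : ℝ) * (Fintype.card ℬ : ℝ))⁻¹) *
    (κ (q.1.1, q.2.1) (q.1.2, q.2.2)).toReal

lemma pgk_nonneg (κ : 𝒜 × ℬ → PMF (𝒰 × 𝒱)) (q : (𝒜 × 𝒰) × (ℬ × 𝒱)) : 0 ≤ pgk κ q := by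
  unfold pgk
  have h1 : (0:ℝ) ≤ (((Fintype.card 𝒜 : ℝ) * (Fintype.card ℬ : ℝ)))⁻¹ := by positivity
  exact mul_nonneg h1 ENNReal.toReal_nonneg

lemma kappa_sum_one (κ : 𝒜 × ℬ → PMF (𝒰 × 𝒱)) (ab : 𝒜 × ℬ) :
    ∑ u, ∑ v, κ ab (u, v) = 1 := by
  have h := (κ ab).tsum_coe
  rw [tsum_fintype] at h
  rw [← h, Fintype.sum_prod_type]

lemma canonical_extraction (κ : 𝒜 × ℬ → PMF (𝒰 × 𝒱)) (hκ : FailsCompleteness κ) :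
    ∃ (S : Type) (_ : Fintype S) (c : 𝒜 × 𝒰 → S) (d : ℬ × 𝒱 → S),
      (∀ x y, pgk κ (x, y) ≠ 0 → c x = d y) ∧
      (∀ x y, c x = d y →
        pgk κ (x, y) * (∑ x', if c x' = c x then (∑ y', pgk κ (x', y')) else 0)
          = (∑ y', pgk κ (x, y')) * (∑ x', pgk κ (x', y))) := by
  classical
  letI m0 : MeasurableSpace (𝒜 × ℬ × 𝒰 × 𝒱) := ⊤
  haveI : MeasurableSingletonClass (𝒜 × ℬ × 𝒰 × 𝒱) :=
    ⟨fun _ => MeasurableSpace.measurableSet_top⟩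
  set αE : ℝ≥0∞ := ((Fintype.card 𝒜 : ℝ≥0∞) * (Fintype.card ℬ : ℝ≥0∞))⁻¹ with hαE
  have hcard𝒜 : (Fintype.card 𝒜 : ℝ≥0∞) ≠ 0 := by
    simp [Fintype.card_ne_zero]
  have hcardℬ : (Fintype.card ℬ : ℝ≥0∞) ≠ 0 := by
    simp [Fintype.card_ne_zero]
  have hαEne : αE ≠ ⊤ := by
    rw [hαE]
    simp [ENNReal.inv_ne_top, hcard𝒜, hcardℬ]
  have hsum1 : ∑ w : 𝒜 × ℬ × 𝒰 × 𝒱, αE * κ (w.1, w.2.1) (w.2.2.1, w.2.2.2) = 1 := by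
    simp only [Fintype.sum_prod_type]
    have h1 : ∀ (a : 𝒜) (b : ℬ),
        ∑ u, ∑ v, αE * κ (a, b) (u, v) = αE := by
      intro a b
      simp_rw [← Finset.mul_sum]
      rw [kappa_sum_one κ (a, b), mul_one]
    simp only [h1]
    rw [Finset.sum_const, Finset.sum_const, Finset.card_univ, Finset.card_univ,
      nsmul_eq_mul, nsmul_eq_mul, hαE]
    rw [← mul_assoc, ENNReal.mul_inv_cancel (by exact mul_ne_zero hcard𝒜 hcardℬ)
      (by simp [ENNReal.mul_ne_top])]
  set q : PMF (𝒜 × ℬ × 𝒰 × 𝒱) :=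
    PMF.ofFintype (fun w => αE * κ (w.1, w.2.1) (w.2.2.1, w.2.2.2)) hsum1 with hq
  set ν : Measure (𝒜 × ℬ × 𝒰 × 𝒱) := q.toMeasure with hν
  haveI hprob : IsProbabilityMeasure ν := PMF.toMeasure.isProbabilityMeasure q
  have hqap : ∀ w, q w = αE * κ (w.1, w.2.1) (w.2.2.1, w.2.2.2) := fun w => rfl
  have hνset : ∀ s : Set (𝒜 × ℬ × 𝒰 × 𝒱), ν s = ∑ w, s.indicator q w := fun s =>
    PMF.toMeasure_apply_fintype q s
  -- measure of the (A,B)-cylinder sets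
  have hcyl : ∀ (a : 𝒜) (b : ℬ), ν {ω | ω.1 = a ∧ ω.2.1 = b} = αE := by
    intro a b
    rw [hνset]
    have hind : ∀ w, ({ω : 𝒜 × ℬ × 𝒰 × 𝒱 | ω.1 = a ∧ ω.2.1 = b}).indicator q w
        = if w.1 = a ∧ w.2.1 = b then αE * κ (w.1, w.2.1) (w.2.2.1, w.2.2.2) else 0 := by
      intro w
      rw [Set.indicator_apply]
      simp only [Set.mem_setOf_eq]
      split_ifs with h
      · exact hqap w
      · rfl
    simp only [hind]
    simp only [Fintype.sum_prod_type]
    have h2 : ∀ (a' : 𝒜) (b' : ℬ), ∑ u, ∑ v,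
        (if a' = a ∧ b' = b then αE * κ (a', b') (u, v) else 0)
        = if a' = a ∧ b' = b then αE else 0 := by
      intro a' b'
      by_cases h : a' = a ∧ b' = b
      · simp only [if_pos h]
        simp_rw [← Finset.mul_sum]
        rw [kappa_sum_one κ (a', b'), mul_one]
      · simp [if_neg h]
    simp only [h2]
    simp [Finset.sum_ite_eq, ite_and]
  have hunif : ∀ (a : 𝒜) (b : ℬ),
      ν {ω | ω.1 = a ∧ ω.2.1 = b}
        = ((Nat.card 𝒜 : ℝ≥0∞) * (Nat.card ℬ : ℝ≥0∞))⁻¹ := by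
    intro a b
    rw [hcyl a b, hαE, Nat.card_eq_fintype_card, Nat.card_eq_fintype_card]
  have hsingle : ∀ (a : 𝒜) (b : ℬ) (u : 𝒰) (v : 𝒱),
      ν {ω | ω.1 = a ∧ ω.2.1 = b ∧ ω.2.2.1 = u ∧ ω.2.2.2 = v}
        = αE * κ (a, b) (u, v) := by
    intro a b u v
    have hs : {ω : 𝒜 × ℬ × 𝒰 × 𝒱 | ω.1 = a ∧ ω.2.1 = b ∧ ω.2.2.1 = u ∧ ω.2.2.2 = v}
        = {(a, b, u, v)} := by
      ext w
      simp [Prod.ext_iff, and_assoc]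
    rw [hs, hν, q.toMeasure_apply_singleton (a, b, u, v) (measurableSet_singleton _)]
    simpa using hqap (a, b, u, v)
  have hgen0 : GeneratedBy ν κ (fun ω => ω.1) (fun ω => ω.2.1) (fun ω => ω.2.2.1)
      (fun ω => ω.2.2.2) (fun _ => ()) := by
    intro t a b u v
    have ht : ∀ (s : Unit), ((() : Unit) = s) = True := fun s => by simp
    simp only [ht, true_and]
    rw [hsingle a b u v, hcyl a b]
  obtain ⟨S, hFS, τ, hτdisc, h1, h2, h3⟩ := hκ (𝒜 × ℬ × 𝒰 × 𝒱) ⊤ ν hprob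
    (fun ω => ω.1) (fun ω => ω.2.1) (fun ω => ω.2.2.1) (fun ω => ω.2.2.2)
    (fun _ => MeasurableSpace.measurableSet_top) (fun _ => MeasurableSpace.measurableSet_top)
    (fun _ => MeasurableSpace.measurableSet_top) (fun _ => MeasurableSpace.measurableSet_top)
    hunif hgen0
  -- bridge to the finite pmf p₀
  set p₀ : (𝒜 × ℬ × 𝒰 × 𝒱) → ℝ := fun w => (ν (id ⁻¹' {w})).toReal with hp₀def
  have hid : DiscreteRV (id : (𝒜 × ℬ × 𝒰 × 𝒱) → (𝒜 × ℬ × 𝒰 × 𝒱)) :=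
    fun _ => MeasurableSpace.measurableSet_top
  have hp₀nn : ∀ w, 0 ≤ p₀ w := fun w => ENNReal.toReal_nonneg
  have hp₀q : ∀ w, p₀ w = (q w).toReal := by
    intro w
    rw [hp₀def]
    simp only [Set.preimage_id]
    rw [hν, q.toMeasure_apply_singleton w (measurableSet_singleton _)]
  have hp₀sum : ∑ w, p₀ w = 1 := by
    simp only [hp₀q]
    rw [← ENNReal.toReal_sum (fun w _ => PMF.apply_ne_top q w)]
    have hq1 : ∑ w, q w = 1 := by
      have := q.tsum_coe
      rwa [tsum_fintype] at this
    rw [hq1, ENNReal.toReal_one]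
  set fX : (𝒜 × ℬ × 𝒰 × 𝒱) → 𝒜 × 𝒰 := fun w => (w.1, w.2.2.1) with hfX
  set fY : (𝒜 × ℬ × 𝒰 × 𝒱) → ℬ × 𝒱 := fun w => (w.2.1, w.2.2.2) with hfY
  have hb1 : cmiP p₀ fX fY τ = 0 := by
    have e : cmi ν (pair (fun ω : 𝒜 × ℬ × 𝒰 × 𝒱 => ω.1) (fun ω => ω.2.2.1))
        (pair (fun ω => ω.2.1) (fun ω => ω.2.2.2)) τ = cmiP p₀ fX fY τ :=
      cmi_eq_cmiP ν id hid fX fY τ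
    rw [← e]
    exact h1
  have hb2 : cmiP p₀ τ fX fY = 0 := by
    have e : cmi ν τ (pair (fun ω : 𝒜 × ℬ × 𝒰 × 𝒱 => ω.1) (fun ω => ω.2.2.1))
        (pair (fun ω => ω.2.1) (fun ω => ω.2.2.2)) = cmiP p₀ τ fX fY :=
      cmi_eq_cmiP ν id hid τ fX fY
    rw [← e]
    exact h2
  have hb3 : cmiP p₀ τ fY fX = 0 := by
    have e : cmi ν τ (pair (fun ω : 𝒜 × ℬ × 𝒰 × 𝒱 => ω.2.1) (fun ω => ω.2.2.2))
        (pair (fun ω => ω.1) (fun ω => ω.2.2.1)) = cmiP p₀ τ fY fX :=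
      cmi_eq_cmiP ν id hid τ fY fX
    rw [← e]
    exact h3
  have F1 := (cmiP_eq_zero_iff p₀ hp₀nn hp₀sum fX fY τ).1 hb1
  have F2 := (cmiP_eq_zero_iff p₀ hp₀nn hp₀sum τ fX fY).1 hb2
  have F3 := (cmiP_eq_zero_iff p₀ hp₀nn hp₀sum τ fY fX).1 hb3
  have hfg : ∀ w w', fX w = fX w' → fY w = fY w' → w = w' := by
    intro w w' hx hy
    simp only [hfX, hfY, Prod.mk.injEq] at hx hy
    simp [Prod.ext_iff, hx.1, hx.2, hy.1, hy.2]
  have hwellX := tau_function_of p₀ hp₀nn τ fX fY hfg F3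
  have hwellY := tau_function_of p₀ hp₀nn τ fY fX (fun w w' h1 h2 => hfg w w' h2 h1) F2
  set c : 𝒜 × 𝒰 → S := fun x =>
    if h : ∃ w, p₀ w ≠ 0 ∧ fX w = x then τ h.choose else τ (Classical.arbitrary _) with hcdef
  set d : ℬ × 𝒱 → S := fun y =>
    if h : ∃ w, p₀ w ≠ 0 ∧ fY w = y then τ h.choose else τ (Classical.arbitrary _) with hddef
  have hc : ∀ w, p₀ w ≠ 0 → τ w = c (fX w) := by
    intro w hw
    have hex : ∃ w', p₀ w' ≠ 0 ∧ fX w' = fX w := ⟨w, hw, rfl⟩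
    rw [hcdef]
    simp only [dif_pos hex]
    exact hwellX w hex.choose hw hex.choose_spec.1 hex.choose_spec.2.symm
  have hd : ∀ w, p₀ w ≠ 0 → τ w = d (fY w) := by
    intro w hw
    have hex : ∃ w', p₀ w' ≠ 0 ∧ fY w' = fY w := ⟨w, hw, rfl⟩
    rw [hddef]
    simp only [dif_pos hex]
    exact hwellY w hex.choose hw hex.choose_spec.1 hex.choose_spec.2.symm
  have hglue : ∀ (x : 𝒜 × 𝒰) (y : ℬ × 𝒱), p₀ (x.1, y.1, x.2, y.2) = pgk κ (x, y) := by
    intro x y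
    rw [hp₀q, hqap]
    simp only [pgk]
    rw [ENNReal.toReal_mul]
    congr 1
    rw [hαE, ENNReal.toReal_inv, ENNReal.toReal_mul, ENNReal.toReal_natCast, ENNReal.toReal_natCast]
  have hatom : ∀ (x : 𝒜 × 𝒰) (y : ℬ × 𝒱),
      pm p₀ (fun w => (fX w, fY w)) (x, y) = pgk κ (x, y) := by
    intro x y
    rw [← hglue]
    simp only [pm]
    rw [Finset.sum_eq_single (x.1, y.1, x.2, y.2)]
    · simp [hfX, hfY]
    · intro w _ hne
      rw [if_neg]
      intro hcon
      apply hne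
      simp only [hfX, hfY, Prod.ext_iff] at hcon
      obtain ⟨⟨e1, e2⟩, e3, e4⟩ := hcon
      simp [Prod.ext_iff, e1, e2, e3, e4]
    · simp
  have hmargX : ∀ x, pm p₀ fX x = ∑ y', pgk κ (x, y') := by
    intro x
    rw [← pm_marg_left p₀ fX fY x]
    exact Finset.sum_congr rfl fun y' _ => hatom x y'
  have hmargY : ∀ y, pm p₀ fY y = ∑ x', pgk κ (x', y) := by
    intro y
    rw [← pm_marg_right p₀ fX fY y]
    exact Finset.sum_congr rfl fun x' _ => hatom x' y
  have hτpm : ∀ s, pm p₀ τ s = ∑ x', if c x' = s then (∑ y', pgk κ (x', y')) else 0 := by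
    intro s
    rw [pm_ae_congr p₀ τ (fun w => c (fX w)) (fun w hw => hc w hw) s, pm_comp' p₀ fX c s]
    exact Finset.sum_congr rfl fun x' _ => by
      by_cases h : c x' = s <;> simp [h, hmargX x']
  refine ⟨S, hFS, c, d, ?_, ?_⟩
  · intro x y hne
    have hp : p₀ (x.1, y.1, x.2, y.2) ≠ 0 := by rw [hglue]; exact hne
    have h1' := hc _ hp
    have h2' := hd _ hp
    rw [show fX (x.1, y.1, x.2, y.2) = x from rfl] at h1'
    rw [show fY (x.1, y.1, x.2, y.2) = y from rfl] at h2'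
    rw [← h1', h2']
  · intro x y hcd
    have hF := F1 x y (c x)
    rw [pm_tau_right p₀ τ fX fY c hc x y (c x)] at hF
    rw [pm_tau_snd p₀ τ fX c hc x (c x)] at hF
    rw [pm_tau_snd p₀ τ fY d hd y (c x)] at hF
    rw [if_pos rfl, if_pos rfl, if_pos hcd.symm] at hF
    rw [hatom, hτpm, hmargX, hmargY] at hF
    exact hF

end Canonical



/-- If a primitive `κ` fails the completeness condition, `I[A;B|Z] = 0` and `(U,V)` is
generated by one use of `κ` with inputs `(A,B)` and side information `Z`, then the pair
`(⟨Z,A,U⟩, ⟨Z,B,V⟩)` is trivial. -/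
theorem stmt8 {Ω : Type*} [MeasurableSpace Ω] (μ : Measure Ω) [IsProbabilityMeasure μ]
    {𝒜 ℬ 𝒰 𝒱 𝒵 : Type} [Fintype 𝒜] [Fintype ℬ] [Fintype 𝒰] [Fintype 𝒱] [Fintype 𝒵]
    [Nonempty 𝒜] [Nonempty ℬ] [Nonempty 𝒰] [Nonempty 𝒱] [Nonempty 𝒵]
    (κ : 𝒜 × ℬ → PMF (𝒰 × 𝒱)) (hκ : FailsCompleteness κ)
    (A : Ω → 𝒜) (B : Ω → ℬ) (U : Ω → 𝒰) (V : Ω → 𝒱) (Z : Ω → 𝒵)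
    (hA : DiscreteRV A) (hB : DiscreteRV B) (hU : DiscreteRV U) (hV : DiscreteRV V)
    (hZ : DiscreteRV Z)
    (hMarkov : cmi μ A B Z = 0) (hgen : GeneratedBy μ κ A B U V Z) :
    IsTrivialPair μ (pair Z (pair A U)) (pair Z (pair B V)) := by
  classical
  set G : Ω → 𝒵 × 𝒜 × ℬ × 𝒰 × 𝒱 := fun ω => (Z ω, A ω, B ω, U ω, V ω) with hGdef
  have hGdisc : DiscreteRV G := by
    intro w
    have hset : G ⁻¹' {w} = (Z ⁻¹' {w.1} ∩ A ⁻¹' {w.2.1}) ∩ (B ⁻¹' {w.2.2.1}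
        ∩ (U ⁻¹' {w.2.2.2.1} ∩ V ⁻¹' {w.2.2.2.2})) := by
      ext ω
      simp only [Set.mem_preimage, Set.mem_singleton_iff, Set.mem_inter_iff, hGdef,
        Prod.ext_iff]
      tauto
    rw [hset]
    exact (((hZ _).inter (hA _)).inter ((hB _).inter ((hU _).inter (hV _))))
  set P : (𝒵 × 𝒜 × ℬ × 𝒰 × 𝒱) → ℝ := fun w => (μ (G ⁻¹' {w})).toReal with hPdef
  have hPnn : ∀ w, 0 ≤ P w := fun w => ENNReal.toReal_nonneg
  have hPsum : ∑ w, P w = 1 := by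
    have h := pm_eq_measure μ G hGdisc (fun _ => (() : Unit)) ()
    have hl : pm P (fun _ => (() : Unit)) () = ∑ w, P w := by
      simp [pm]
    have hr : (((fun _ => (() : Unit)) ∘ G) ⁻¹' {()}) = Set.univ := by
      ext ω
      simp
    rw [hl, hr] at h
    rw [h]
    simp
  -- notation for the relevant maps out of the grand variable
  set fx : (𝒵 × 𝒜 × ℬ × 𝒰 × 𝒱) → 𝒵 × (𝒜 × 𝒰) := fun w => (w.1, (w.2.1, w.2.2.2.1)) with hfxd
  set fy : (𝒵 × 𝒜 × ℬ × 𝒰 × 𝒱) → 𝒵 × (ℬ × 𝒱) := fun w => (w.1, (w.2.2.1, w.2.2.2.2)) with hfyd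
  -- Markov condition in factorized form
  have hMarkP : cmiP P (fun w => w.2.1) (fun w => w.2.2.1) (fun w => w.1) = 0 := by
    have e : cmi μ A B Z
        = cmiP P (fun w => w.2.1) (fun w => w.2.2.1) (fun w => w.1) :=
      cmi_eq_cmiP μ G hGdisc (fun w => w.2.1) (fun w => w.2.2.1) (fun w => w.1)
    rw [← e]
    exact hMarkov
  have hMark := (cmiP_eq_zero_iff P hPnn hPsum (fun w => w.2.1) (fun w => w.2.2.1)
    (fun w => w.1)).1 hMarkP
  -- atoms of P factor through κ
  have hPatom : ∀ z a b u v, P (z, a, b, u, v)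
      = pm P (fun w => ((w.2.1, w.2.2.1), w.1)) ((a, b), z) * (κ (a, b) (u, v)).toReal := by
    intro z a b u v
    have hset1 : G ⁻¹' {(z, a, b, u, v)}
        = {ω | Z ω = z ∧ A ω = a ∧ B ω = b ∧ U ω = u ∧ V ω = v} := by
      ext ω
      simp [hGdef, Prod.ext_iff]
    have hset2 : (((fun w : 𝒵 × 𝒜 × ℬ × 𝒰 × 𝒱 => ((w.2.1, w.2.2.1), w.1)) ∘ G) ⁻¹'
        {((a, b), z)}) = {ω | Z ω = z ∧ A ω = a ∧ B ω = b} := by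
      ext ω
      simp only [Set.mem_preimage, Function.comp_apply, Set.mem_singleton_iff,
        Set.mem_setOf_eq, hGdef, Prod.ext_iff]
      tauto
    have hP1 : P (z, a, b, u, v) = (μ {ω | Z ω = z ∧ A ω = a ∧ B ω = b ∧ U ω = u ∧ V ω = v}).toReal := by
      rw [hPdef]
      simp only
      rw [hset1]
    rw [hP1, hgen z a b u v, ENNReal.toReal_mul]
    congr 1
    rw [pm_eq_measure μ G hGdisc _ ((a, b), z), hset2]
  -- canonical extraction of the common part
  obtain ⟨S, hFS, c, d, hS1, hS2⟩ := canonical_extraction κ hκ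
  haveI : Fintype S := hFS
  set αR : ℝ := (((Fintype.card 𝒜 : ℝ) * (Fintype.card ℬ : ℝ)))⁻¹ with hαRdef
  have hαR : (0:ℝ) < αR := by
    have h1 : (0:ℝ) < (Fintype.card 𝒜 : ℝ) := by exact_mod_cast Fintype.card_pos
    have h2 : (0:ℝ) < (Fintype.card ℬ : ℝ) := by exact_mod_cast Fintype.card_pos
    rw [hαRdef]
    positivity
  have hpgk_val : ∀ (x : 𝒜 × 𝒰) (y : ℬ × 𝒱), pgk κ (x, y)
      = αR * (κ (x.1, y.1) (x.2, y.2)).toReal := fun x y => rfl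
  set e : 𝒵 × (𝒜 × 𝒰) → 𝒵 × S := fun p => (p.1, c p.2) with hed
  set e' : 𝒵 × (ℬ × 𝒱) → 𝒵 × S := fun p => (p.1, d p.2) with he'd
  set ft : (𝒵 × 𝒜 × ℬ × 𝒰 × 𝒱) → 𝒵 × S := fun w => (w.1, c (w.2.1, w.2.2.2.1)) with hftd
  have haeX : ∀ w, P w ≠ 0 → ft w = e (fx w) := fun w _ => rfl
  have haeY : ∀ w, P w ≠ 0 → ft w = e' (fy w) := by
    intro w hw
    obtain ⟨z, a, b, u, v⟩ := w
    have hk : (κ (a, b) (u, v)).toReal ≠ 0 := by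
      intro h0
      apply hw
      rw [hPatom z a b u v, h0, mul_zero]
    have hpg : pgk κ ((a, u), (b, v)) ≠ 0 := by
      rw [hpgk_val]
      exact mul_ne_zero (ne_of_gt hαR) hk
    have hcd := hS1 (a, u) (b, v) hpg
    simp only [hftd, he'd, hfyd]
    rw [hcd]
  have hTdisc : DiscreteRV (fun ω : Ω => (Z ω, c (A ω, U ω))) :=
    DiscreteRV.comp hGdisc ft
  refine ⟨𝒵 × S, inferInstance, fun ω => (Z ω, c (A ω, U ω)), hTdisc, ?_, ?_, ?_⟩
  · -- I[X ; Y | T] = 0 : the main goal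
    have e1 : cmi μ (pair Z (pair A U)) (pair Z (pair B V))
        (fun ω : Ω => (Z ω, c (A ω, U ω))) = cmiP P fx fy ft :=
      cmi_eq_cmiP μ G hGdisc fx fy ft
    rw [e1]
    refine (cmiP_eq_zero_iff P hPnn hPsum fx fy ft).2 ?_
    intro x y t
    rw [pm_tau_right P ft fx fy e haeX x y t, pm_tau_snd P ft fx e haeX x t,
      pm_tau_snd P ft fy e' haeY y t]
    by_cases h1 : e x = t
    · by_cases h2 : e' y = t
      · rw [if_pos h1, if_pos h1, if_pos h2]
        -- main identity
        obtain ⟨z, xb⟩ := x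
        obtain ⟨z₂, yb⟩ := y
        subst h1
        have h2' : z₂ = z ∧ d yb = c xb := by
          simpa [hed, he'd, Prod.ext_iff] using h2
        obtain ⟨hz2, hdc⟩ := h2'
        subst z₂
        -- atom and marginal formulas
        have I1 : ∀ (z1 z2 : 𝒵) (xb1 : 𝒜 × 𝒰) (yb1 : ℬ × 𝒱),
            pm P (fun w => (fx w, fy w)) ((z1, xb1), (z2, yb1))
              = if z1 = z2 then P (z1, xb1.1, yb1.1, xb1.2, yb1.2) else 0 := by
          intro z1 z2 xb1 yb1
          by_cases hzz : z1 = z2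
          · subst hzz
            rw [if_pos rfl]
            simp only [pm]
            rw [Finset.sum_eq_single (z1, xb1.1, yb1.1, xb1.2, yb1.2)]
            · simp [hfxd, hfyd]
            · intro w _ hne
              rw [if_neg]
              intro hcon
              apply hne
              simp only [hfxd, hfyd, Prod.ext_iff] at hcon
              obtain ⟨⟨ea1, ea2, ea3⟩, eb1, eb2, eb3⟩ := hcon
              simp [Prod.ext_iff, ea1, ea2, ea3, eb2, eb3]
            · simp
          · rw [if_neg hzz]
            refine Finset.sum_eq_zero fun w _ => ?_
            rw [if_neg]
            intro hcon
            simp only [hfxd, hfyd, Prod.ext_iff] at hcon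
            exact hzz (by rw [← hcon.1.1, hcon.2.1])
        have I2 : ∀ (z1 : 𝒵) (xb1 : 𝒜 × 𝒰), pm P fx (z1, xb1)
            = ∑ yb1 : ℬ × 𝒱, P (z1, xb1.1, yb1.1, xb1.2, yb1.2) := by
          intro z1 xb1
          rw [← pm_marg_left P fx fy (z1, xb1), Fintype.sum_prod_type]
          simp_rw [I1]
          rw [Finset.sum_comm]
          simp [Finset.sum_ite_eq]
        have I3 : ∀ (z1 : 𝒵) (yb1 : ℬ × 𝒱), pm P fy (z1, yb1)
            = ∑ xb1 : 𝒜 × 𝒰, P (z1, xb1.1, yb1.1, xb1.2, yb1.2) := by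
          intro z1 yb1
          rw [← pm_marg_right P fx fy (z1, yb1), Fintype.sum_prod_type]
          simp_rw [I1]
          rw [Finset.sum_comm]
          simp [Finset.sum_ite_eq']
        have I4 : ∀ (z1 : 𝒵) (s : S), pm P ft (z1, s)
            = ∑ xb1 : 𝒜 × 𝒰, (if c xb1 = s
                then (∑ yb1 : ℬ × 𝒱, P (z1, xb1.1, yb1.1, xb1.2, yb1.2)) else 0) := by
          intro z1 s
          have h0 : pm P ft (z1, s) = pm P (fun w => e (fx w)) (z1, s) := rfl
          rw [h0, pm_comp' P fx e (z1, s), Fintype.sum_prod_type, Finset.sum_comm]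
          refine Finset.sum_congr rfl fun xb1 _ => ?_
          rw [Finset.sum_eq_single z1]
          · by_cases hcs : c xb1 = s
            · rw [if_pos (show e (z1, xb1) = (z1, s) by simp [hed, hcs]), if_pos hcs, I2]
            · rw [if_neg (show ¬ e (z1, xb1) = (z1, s) by
                simp [hed, Prod.ext_iff, hcs]), if_neg hcs]
          · intro z2 _ hne
            rw [if_neg]
            intro hcon
            apply hne
            have := congrArg Prod.fst hcon
            simpa [hed] using this
          · simp
        have hI4' : pm P ft (e (z, xb)) = ∑ xb1 : 𝒜 × 𝒰, (if c xb1 = c xb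
            then (∑ yb1 : ℬ × 𝒱, P (z, xb1.1, yb1.1, xb1.2, yb1.2)) else 0) :=
          I4 z (c xb)
        rw [I1 z z xb yb, if_pos rfl, I2 z xb, I3 z yb, hI4']
        -- now a purely finite computation; split on the mass of the slice
        by_cases hE : pm P (fun w => w.1) z = 0
        · have hP30 : ∀ a b, pm P (fun w => ((w.2.1, w.2.2.1), w.1)) ((a, b), z) = 0 := by
            intro a b
            have hle : pm P (fun w => ((w.2.1, w.2.2.1), w.1)) ((a, b), z)
                ≤ pm P (fun w => w.1) z := by
              refine pm_le_pm hPnn ?_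
              intro w hw
              simp only [Prod.ext_iff] at hw
              exact hw.2
            exact le_antisymm (hE ▸ hle) (pm_nonneg hPnn _ _)
          have hP0 : ∀ a b u v, P (z, a, b, u, v) = 0 := fun a b u v => by
            rw [hPatom, hP30, zero_mul]
          simp [hP0]
        · set Ez : ℝ := pm P (fun w => w.1) z with hEzdef
          set γ : ℝ := αR * Ez with hγdef
          have hγ : γ ≠ 0 := mul_ne_zero (ne_of_gt hαR) hE
          have hm : ∀ (xb1 : 𝒜 × 𝒰) (yb1 : ℬ × 𝒱),
              pm P (fun w => (w.2.1, w.1)) (xb1.1, z) * pm P (fun w => (w.2.2.1, w.1)) (yb1.1, z)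
                * pgk κ (xb1, yb1) = γ * P (z, xb1.1, yb1.1, xb1.2, yb1.2) := by
            intro xb1 yb1
            have hm1 := hMark xb1.1 yb1.1 z
            have hm2 := hPatom z xb1.1 yb1.1 xb1.2 yb1.2
            rw [hpgk_val]
            rw [hγdef]
            linear_combination (-(αR * (κ (xb1.1, yb1.1) (xb1.2, yb1.2)).toReal)) * hm1
              - (αR * Ez) * hm2
          have htrans := product_transfer (pgk κ) (pgk_nonneg κ) c d hS1 hS2
            (fun xb1 => pm P (fun w => (w.2.1, w.1)) (xb1.1, z))
            (fun yb1 => pm P (fun w => (w.2.2.1, w.1)) (yb1.1, z))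
            (fun _ => pm_nonneg hPnn _ _) (fun _ => pm_nonneg hPnn _ _) xb yb hdc.symm
          simp_rw [hm] at htrans
          simp_rw [← Finset.mul_sum, ← mul_ite_zero] at htrans
          rw [← Finset.mul_sum] at htrans
          have key : (γ * γ) * (P (z, xb.1, yb.1, xb.2, yb.2) *
              (∑ xb1 : 𝒜 × 𝒰, (if c xb1 = c xb
                then (∑ yb1 : ℬ × 𝒱, P (z, xb1.1, yb1.1, xb1.2, yb1.2)) else 0)))
              = (γ * γ) * ((∑ yb1 : ℬ × 𝒱, P (z, xb.1, yb1.1, xb.2, yb1.2))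
                * (∑ xb1 : 𝒜 × 𝒰, P (z, xb1.1, yb.1, xb1.2, yb.2))) := by
            linear_combination htrans
          exact mul_left_cancel₀ (mul_ne_zero hγ hγ) key
      · rw [if_pos h1, if_neg h2,
          pm_pair_zero P ft fx fy e e' haeX haeY (x := x) (y := y)
            (by intro hc; rw [hc] at h1; exact h2 h1)]
        ring
    · rw [if_neg h1, if_neg h1]
      ring
  · -- I[T ; X | Y] = 0
    have e2 : cmi μ (fun ω : Ω => (Z ω, c (A ω, U ω))) (pair Z (pair A U))
        (pair Z (pair B V)) = cmiP P ft fx fy :=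
      cmi_eq_cmiP μ G hGdisc ft fx fy
    rw [e2]
    refine (cmiP_eq_zero_iff P hPnn hPsum ft fx fy).2 ?_
    intro t x y
    exact fact_of_ae P ft fy fx e' haeY t x y
  · -- I[T ; Y | X] = 0
    have e3 : cmi μ (fun ω : Ω => (Z ω, c (A ω, U ω))) (pair Z (pair B V))
        (pair Z (pair A U)) = cmiP P ft fy fx :=
      cmi_eq_cmiP μ G hGdisc ft fy fx
    rw [e3]
    refine (cmiP_eq_zero_iff P hPnn hPsum ft fy fx).2 ?_
    intro t y x
    exact fact_of_ae P ft fx fy e haeX t y x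

end SecureComputation
end
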